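/- Let H = (U ∪ {s}, F) be a finite connected multigraph without loop-edges with sink s, let w ∈ U, and let H' be H with one extra edge joining w to s. For η* ∈ R_{H'} \ R_H (such η* satisfy η*(w) = deg_H(w)), let W(η*) denote the set of vertices that topple in the wave started from η*: topple w once and carry out in H all topplings possible without toppling w a second time. Call η* a last wave if there exists a neighbour y of w in U ∪ {s} with y ∉ W(η*). Then (1/deg_H(w)) · |R_H| ≤ |{η* ∈ R_{H'} \ R_H : η* is a last wave}| ≤ |R_H|. -/

import Mathlib

/-!
Counting last waves: with `H' = H + (extra edge w–s)`, the number of configurations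
`η* ∈ R_{H'} \ R_H` that are last waves satisfies
`(1/deg_H(w)) |R_H| ≤ #{last waves} ≤ |R_H|`.
-/

/-- A finite connected multigraph without loop-edges, with a distinguished sink vertex.
`mult x y` is the number of edges joining `x` and `y`. -/
structure SandpileGraph (V : Type*) [Fintype V] [DecidableEq V] where
  sink : V
  mult : V → V → ℕ
  symm : ∀ x y, mult x y = mult y x
  loopless : ∀ x, mult x x = 0
  conn : ∀ x : V, Relation.ReflTransGen (fun a b => 0 < mult a b) x sink

namespace SandpileGraph

variable {V : Type*} [Fintype V] [DecidableEq V]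

/-- The degree of a vertex. -/
def deg (H : SandpileGraph V) (x : V) : ℕ := ∑ y, H.mult x y

/-- Toppling of the vertex `x`: `x` sends one grain along each incident edge;
grains reaching the sink are lost. -/
def topple (H : SandpileGraph V) (x : V) (η : V → ℕ) : V → ℕ :=
  fun y => if y = x then η y - H.deg x else if y = H.sink then η y else η y + H.mult x y

/-- Legality of a finite sequence of topplings. -/
def LegalSeq (H : SandpileGraph V) : (V → ℕ) → List V → Prop
  | _, [] => True
  | η, x :: l => x ≠ H.sink ∧ H.deg x ≤ η x ∧ H.LegalSeq (H.topple x η) l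

/-- The result of performing a sequence of topplings. -/
def toppleList (H : SandpileGraph V) : (V → ℕ) → List V → (V → ℕ)
  | η, [] => η
  | η, x :: l => H.toppleList (H.topple x η) l

/-- A configuration is stable if every non-sink vertex has fewer grains than its degree. -/
def Stable (H : SandpileGraph V) (η : V → ℕ) : Prop :=
  ∀ x, x ≠ H.sink → η x < H.deg x

/-- Recurrent configurations of the sandpile Markov chain: stable configurations (vanishing
at the sink) reachable from any configuration by adding grains at non-sink vertices and
stabilizing. -/
def Recurrent (H : SandpileGraph V) (η : V → ℕ) : Prop :=
  η H.sink = 0 ∧ H.Stable η ∧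
    ∀ ξ : V → ℕ, ξ H.sink = 0 →
      ∃ m : V → ℕ, m H.sink = 0 ∧
        ∃ l : List V, H.LegalSeq (ξ + m) l ∧ H.toppleList (ξ + m) l = η ∧
          H.Stable (H.toppleList (ξ + m) l)

/-- A wave started at `w` from the configuration `η` (with `η` unstable at `w` in `H`):
`w` is toppled once, and then all topplings in `H` are carried out that are possible
without toppling `w` a second time; each vertex topples at most once.  The list `l` records
the toppled vertices in a legal order; the wave `W(η)` is the set of entries of `l`. -/
def IsWaveList (H : SandpileGraph V) (w : V) (η : V → ℕ) (l : List V) : Prop :=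
  l.Nodup ∧ w ∈ l ∧ H.LegalSeq η l ∧
    ∀ v, v ≠ H.sink → v ≠ w → H.toppleList η l v < H.deg v

/-- `η` is a last wave: some neighbour `y` of `w` in `H` (in `U ∪ {s}`) does not belong
to the wave `W(η)` started at `w` from `η`. -/
def IsLastWaveCfg (H : SandpileGraph V) (w : V) (η : V → ℕ) : Prop :=
  ∃ l : List V, H.IsWaveList w η l ∧ ∃ y : V, 0 < H.mult w y ∧ y ∉ l

end SandpileGraph
namespace SandpileGraph

open Finset

variable {V : Type*} [Fintype V] [DecidableEq V] (H : SandpileGraph V)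

lemma toppleList_append (η : V → ℕ) (l₁ l₂ : List V) :
    H.toppleList η (l₁ ++ l₂) = H.toppleList (H.toppleList η l₁) l₂ := by
  induction l₁ generalizing η with
  | nil => rfl
  | cons v t ih => simp only [List.cons_append, List.append_eq, toppleList, ih]

lemma legalSeq_append {η : V → ℕ} {l₁ l₂ : List V} :
    H.LegalSeq η (l₁ ++ l₂) ↔ H.LegalSeq η l₁ ∧ H.LegalSeq (H.toppleList η l₁) l₂ := by
  induction l₁ generalizing η with
  | nil => simp [LegalSeq, toppleList]
  | cons v t ih =>
    simp only [List.cons_append, List.append_eq, LegalSeq, toppleList, ih]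
    tauto

lemma topple_sink {x : V} (η : V → ℕ) (hx : x ≠ H.sink) :
    H.topple x η H.sink = η H.sink := by
  simp [topple, Ne.symm hx]

lemma mem_ne_sink {η : V → ℕ} {l : List V} (h : H.LegalSeq η l) {v : V} (hv : v ∈ l) :
    v ≠ H.sink := by
  induction l generalizing η with
  | nil => cases hv
  | cons a t ih =>
    rcases List.mem_cons.1 hv with rfl | hv'
    · exact h.1
    · exact ih h.2.2 hv'

lemma toppleList_sink {η : V → ℕ} {l : List V} (h : H.LegalSeq η l) :
    H.toppleList η l H.sink = η H.sink := by
  induction l generalizing η with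
  | nil => rfl
  | cons a t ih =>
    simp only [toppleList]
    rw [ih h.2.2, topple_sink _ _ h.1]

lemma topple_add {x : V} {η : V → ℕ} (δ : V → ℕ) (hx : H.deg x ≤ η x) :
    H.topple x (η + δ) = H.topple x η + δ := by
  funext y
  simp only [topple, Pi.add_apply]
  split_ifs with h1 h2
  · subst h1; omega
  · rfl
  · ring

lemma legalSeq_add {η : V → ℕ} {l : List V} (δ : V → ℕ) (h : H.LegalSeq η l) :
    H.LegalSeq (η + δ) l ∧ H.toppleList (η + δ) l = H.toppleList η l + δ := by
  induction l generalizing η with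
  | nil => exact ⟨trivial, rfl⟩
  | cons a t ih =>
    obtain ⟨ha, hd, hl⟩ := h
    have e : H.topple a (η + δ) = H.topple a η + δ := H.topple_add δ hd
    obtain ⟨ih1, ih2⟩ := ih hl
    refine ⟨⟨ha, ?_, ?_⟩, ?_⟩
    · simp only [Pi.add_apply]; omega
    · rw [e]; exact ih1
    · simp only [toppleList]; rw [e, ih2]

/-- Fundamental value formula for legal sequences, over `ℤ`. -/
lemma value_formula {η : V → ℕ} {l : List V} (h : H.LegalSeq η l) {x : V} (hx : x ≠ H.sink) :
    (H.toppleList η l x : ℤ) =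
      (η x : ℤ) + (∑ u, (l.count u : ℤ) * H.mult u x) - (l.count x : ℤ) * H.deg x := by
  induction l generalizing η with
  | nil => simp [toppleList]
  | cons v t ih =>
    obtain ⟨hv, hd, hl⟩ := h
    have ihv := ih hl
    have hcount : ∀ u : V, ((v :: t).count u : ℤ) = (t.count u : ℤ) + if u = v then 1 else 0 := by
      intro u
      rw [List.count_cons]
      by_cases hu : u = v
      · subst hu; simp
      · simp [hu, Ne.symm hu]
    have hsum : (∑ u, ((v :: t).count u : ℤ) * H.mult u x)
        = (∑ u, (t.count u : ℤ) * H.mult u x) + H.mult v x := by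
      simp only [hcount, add_mul, ite_mul, one_mul, zero_mul]
      rw [Finset.sum_add_distrib, Finset.sum_ite_eq' Finset.univ v (fun u => (H.mult u x : ℤ))]
      simp
    simp only [toppleList] at *
    rw [ihv, hsum, hcount x]
    by_cases h1 : x = v
    · subst h1
      have ht : H.topple x η x = η x - H.deg x := by simp [topple]
      rw [ht, Nat.cast_sub hd, H.loopless]
      simp only [Nat.cast_zero, eq_self_iff_true, if_true, add_zero]
      ring
    · have ht : H.topple v η x = η x + H.mult v x := by simp [topple, h1, hx]
      rw [ht]
      push_cast
      simp only [if_neg h1]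
      ring

lemma toppleList_eq_of_counts {η : V → ℕ} {l l' : List V}
    (h : H.LegalSeq η l) (h' : H.LegalSeq η l')
    (hc : ∀ v, l.count v = l'.count v) :
    H.toppleList η l = H.toppleList η l' := by
  funext x
  by_cases hx : x = H.sink
  · subst hx; rw [H.toppleList_sink h, H.toppleList_sink h']
  · have := H.value_formula h hx
    have := H.value_formula h' hx
    have : (H.toppleList η l x : ℤ) = (H.toppleList η l' x : ℤ) := by
      simp_all [hc]
    exact_mod_cast this

end SandpileGraph
namespace SandpileGraph

open Finset

variable {V : Type*} [Fintype V] [DecidableEq V] (H : SandpileGraph V)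

/-- "No forbidden subconfiguration". -/
def Allowed (H : SandpileGraph V) (η : V → ℕ) : Prop :=
  ∀ S : Finset V, S.Nonempty → H.sink ∉ S → ∃ v ∈ S, ∑ u ∈ S.erase v, H.mult u v ≤ η v

lemma exists_exit (S : Finset V) (hS : S.Nonempty) (hs : H.sink ∉ S) :
    ∃ v ∈ S, ∑ u ∈ S.erase v, H.mult u v < H.deg v := by
  obtain ⟨x, hx⟩ := hS
  have key : ∀ x : V, Relation.ReflTransGen (fun a b => 0 < H.mult a b) x H.sink →
      x ∈ S → ∃ v ∈ S, ∃ z, 0 < H.mult v z ∧ z ∉ S := by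
    intro x hrtg
    induction hrtg using Relation.ReflTransGen.head_induction_on with
    | refl => intro h; exact absurd h hs
    | head hab _ ih =>
      intro hmem
      rename_i a b _
      by_cases hb : b ∈ S
      · exact ih hb
      · exact ⟨a, hmem, b, hab, hb⟩
  obtain ⟨v, hv, z, hz, hzS⟩ := key x (H.conn x) hx
  refine ⟨v, hv, ?_⟩
  have hzv : z ≠ v := by rintro rfl; simp [H.loopless] at hz
  have hsub : S.erase v ⊆ Finset.univ.erase z := by
    intro u hu
    rcases Finset.mem_erase.1 hu with ⟨huv, huS⟩
    exact Finset.mem_erase.2 ⟨fun h => hzS (h ▸ huS), Finset.mem_univ u⟩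
  calc ∑ u ∈ S.erase v, H.mult u v ≤ ∑ u ∈ Finset.univ.erase z, H.mult u v :=
        Finset.sum_le_sum_of_subset hsub
    _ < H.mult z v + ∑ u ∈ Finset.univ.erase z, H.mult u v := by
        have : 0 < H.mult z v := by rw [H.symm]; exact hz
        omega
    _ = ∑ u, H.mult u v := Finset.add_sum_erase Finset.univ (fun u => H.mult u v) (Finset.mem_univ z)
    _ = H.deg v := by
        unfold deg
        exact Finset.sum_congr rfl (fun u _ => H.symm u v)

lemma allowed_of_ge_deg {η : V → ℕ} (h : ∀ v, v ≠ H.sink → H.deg v ≤ η v) : H.Allowed η := by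
  intro S hS hs
  obtain ⟨v, hv, hlt⟩ := H.exists_exit S hS hs
  exact ⟨v, hv, le_trans (le_of_lt hlt) (h v (fun hh => hs (hh ▸ hv)))⟩

lemma allowed_mono {η η' : V → ℕ} (hle : ∀ v, η v ≤ η' v) (h : H.Allowed η) : H.Allowed η' := by
  intro S hS hs
  obtain ⟨v, hv, hle'⟩ := h S hS hs
  exact ⟨v, hv, le_trans hle' (hle v)⟩

lemma allowed_topple {η : V → ℕ} {x : V} (hx : x ≠ H.sink) (hd : H.deg x ≤ η x)
    (h : H.Allowed η) : H.Allowed (H.topple x η) := by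
  intro S hS hsink
  by_cases hxS : x ∈ S
  · by_cases hSx : S = {x}
    · refine ⟨x, by simp [hSx], ?_⟩
      simp [hSx]
    · have hne : (S.erase x).Nonempty := by
        have hex : ∃ y ∈ S, y ≠ x := by
          by_contra hcon
          push_neg at hcon
          exact hSx (Finset.eq_singleton_iff_unique_mem.2 ⟨hxS, fun y hy => hcon y hy⟩)
        obtain ⟨y, hyS, hyx⟩ := hex
        exact ⟨y, Finset.mem_erase.2 ⟨hyx, hyS⟩⟩
      obtain ⟨v, hv, hvle⟩ := h (S.erase x) hne (fun hh => hsink (Finset.mem_of_mem_erase hh))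
      obtain ⟨hvx, hvS⟩ := Finset.mem_erase.1 hv
      have hvsink : v ≠ H.sink := fun hh => hsink (hh ▸ hvS)
      refine ⟨v, hvS, ?_⟩
      have htv : H.topple x η v = η v + H.mult x v := by simp [topple, hvx, hvsink]
      have hxe : x ∈ S.erase v := Finset.mem_erase.2 ⟨fun hh => hvx hh.symm, hxS⟩
      have hsplit : ∑ u ∈ S.erase v, H.mult u v
          = H.mult x v + ∑ u ∈ (S.erase v).erase x, H.mult u v :=
        (Finset.add_sum_erase (S.erase v) (fun u => H.mult u v) hxe).symm
      rw [htv, hsplit, Finset.erase_right_comm]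
      omega
  · obtain ⟨v, hv, hvle⟩ := h S hS hsink
    have hvx : v ≠ x := fun hh => hxS (hh ▸ hv)
    have hvsink : v ≠ H.sink := fun hh => hsink (hh ▸ hv)
    have htv : H.topple x η v = η v + H.mult x v := by simp [topple, hvx, hvsink]
    exact ⟨v, hv, by omega⟩

lemma allowed_toppleList {η : V → ℕ} {l : List V} (hl : H.LegalSeq η l) (h : H.Allowed η) :
    H.Allowed (H.toppleList η l) := by
  induction l generalizing η with
  | nil => exact h
  | cons a t ih => exact ih hl.2.2 (H.allowed_topple hl.1 hl.2.1 h)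

lemma recurrent_allowed {η : V → ℕ} (h : H.Recurrent η) : H.Allowed η := by
  obtain ⟨hs0, hst, hreach⟩ := h
  obtain ⟨m, hm0, l, hleg, heq, _⟩ :=
    hreach (fun v => if v = H.sink then 0 else H.deg v) (by simp)
  have hge : H.Allowed ((fun v => if v = H.sink then 0 else H.deg v) + m) := by
    apply H.allowed_of_ge_deg
    intro v hv
    simp only [Pi.add_apply, if_neg hv]
    omega
  rw [← heq]
  exact H.allowed_toppleList hleg hge

end SandpileGraph
namespace SandpileGraph

open Finset

variable {V : Type*} [Fintype V] [DecidableEq V] (H : SandpileGraph V)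

lemma deg_eq_sum_in (x : V) : H.deg x = ∑ u, H.mult u x := by
  unfold deg
  exact Finset.sum_congr rfl (fun u _ => H.symm x u)

/-- Maximum principle: a nonnegative "toppling count" vector fixing the configuration
off the sink is identically zero. -/
lemma counts_zero_of_fixed {c : V → ℕ} (hc0 : c H.sink = 0)
    (hfix : ∀ x, x ≠ H.sink → (∑ u, c u * H.mult u x) = c x * H.deg x) :
    ∀ x, c x = 0 := by
  have hne : (Finset.univ : Finset V).Nonempty := ⟨H.sink, Finset.mem_univ _⟩
  obtain ⟨x₀, -, hx₀⟩ := Finset.exists_mem_eq_sup Finset.univ hne c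
  set M := Finset.univ.sup c with hM
  have hle : ∀ u : V, c u ≤ M := fun u => Finset.le_sup (Finset.mem_univ u)
  have key : ∀ x, x ≠ H.sink → c x = M → ∀ z, 0 < H.mult x z → c z = M := by
    intro x hx hcx z hz
    have h1 : ∑ u, c u * H.mult u x = ∑ u, M * H.mult u x := by
      rw [hfix x hx, hcx, ← Finset.mul_sum, ← H.deg_eq_sum_in x]
    have h2 : ∀ u ∈ Finset.univ, c u * H.mult u x ≤ M * H.mult u x :=
      fun u _ => Nat.mul_le_mul_right _ (hle u)
    have h3 := (Finset.sum_eq_sum_iff_of_le h2).1 h1 z (Finset.mem_univ z)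
    have hzx : 0 < H.mult z x := by rw [H.symm]; exact hz
    exact Nat.eq_of_mul_eq_mul_right hzx h3
  have hM0 : M = 0 := by
    by_contra hMne
    have walk : ∀ x, Relation.ReflTransGen (fun a b => 0 < H.mult a b) x H.sink →
        c x = M → M = 0 := by
      intro x hrtg
      induction hrtg using Relation.ReflTransGen.head_induction_on with
      | refl => intro h; rw [← h, hc0]
      | head hab _ ih =>
        rename_i a b _
        intro hca
        by_cases ha : a = H.sink
        · rw [ha, hc0] at hca; exact hca.symm
        · exact ih (key a ha hca b hab)
    exact hMne (walk x₀ (H.conn x₀) hx₀.symm)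
  intro x
  have := hle x
  omega

lemma counts_nil_of_fixed {η : V → ℕ} {l : List V} (h : H.LegalSeq η l)
    (hfix : H.toppleList η l = η) : l = [] := by
  have hc0 : l.count H.sink = 0 :=
    List.count_eq_zero.2 (fun hmem => (H.mem_ne_sink h hmem) rfl)
  have hkey : ∀ x, x ≠ H.sink → (∑ u, l.count u * H.mult u x) = l.count x * H.deg x := by
    intro x hx
    have := H.value_formula h hx
    rw [hfix] at this
    have h2 : (∑ u, (l.count u : ℤ) * H.mult u x) = (l.count x : ℤ) * H.deg x := by linarith
    have h3 : ((∑ u, l.count u * H.mult u x : ℕ) : ℤ) = ((l.count x * H.deg x : ℕ) : ℤ) := by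
      push_cast
      exact h2
    exact_mod_cast h3
  have hall := H.counts_zero_of_fixed hc0 hkey
  cases l with
  | nil => rfl
  | cons a t =>
    exfalso
    have hpos : (a :: t).count a ≠ 0 := by simp [List.count_cons_self]
    exact hpos (hall a)

lemma topple_total_le {x : V} {η : V → ℕ} (hx : x ≠ H.sink) (hd : H.deg x ≤ η x) :
    ∑ y, H.topple x η y ≤ ∑ y, η y := by
  have hpt : ∀ y : V, H.topple x η y + (if y = x then H.deg x else 0) ≤ η y + H.mult x y := by
    intro y
    by_cases h1 : y = x
    · subst h1; simp [topple, H.loopless]; omega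
    · by_cases h2 : y = H.sink <;> simp [topple, h1, h2, Ne.symm hx]
  have hs := Finset.sum_le_sum (fun y (_ : y ∈ Finset.univ) => hpt y)
  rw [Finset.sum_add_distrib, Finset.sum_add_distrib, Finset.sum_ite_eq' Finset.univ x
    (fun _ => H.deg x)] at hs
  simp only [Finset.mem_univ, if_true] at hs
  have : ∑ y, H.mult x y = H.deg x := rfl
  omega

lemma toppleList_total_le {η : V → ℕ} {l : List V} (h : H.LegalSeq η l) :
    ∑ y, H.toppleList η l y ≤ ∑ y, η y := by
  induction l generalizing η with
  | nil => exact le_refl _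
  | cons a t ih =>
    exact le_trans (ih h.2.2) (H.topple_total_le h.1 h.2.1)

lemma toppleList_val_le {η : V → ℕ} {l : List V} (h : H.LegalSeq η l) (x : V) :
    H.toppleList η l x ≤ ∑ y, η y := by
  refine le_trans ?_ (H.toppleList_total_le h)
  exact Finset.single_le_sum (fun y _ => Nat.zero_le _) (Finset.mem_univ x)

end SandpileGraph
namespace SandpileGraph

open Finset

variable {V : Type*} [Fintype V] [DecidableEq V] (H : SandpileGraph V)

lemma prefix_injective {η : V → ℕ} {l : List V} (h : H.LegalSeq η l)
    {i j : ℕ} (hi : i ≤ j) (hj : j ≤ l.length)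
    (heq : H.toppleList η (l.take i) = H.toppleList η (l.take j)) : i = j := by
  by_contra hne
  have hij : i < j := lt_of_le_of_ne hi hne
  set mid := (l.drop i).take (j - i) with hmid
  have htj : l.take j = l.take i ++ mid := by
    rw [hmid, ← List.take_add]
    congr 1
    omega
  have hleg1 : H.LegalSeq η (l.take j) := by
    have : H.LegalSeq η (l.take j ++ l.drop j) := by rw [List.take_append_drop]; exact h
    exact (H.legalSeq_append.1 this).1
  rw [htj] at hleg1
  obtain ⟨hleg2, hleg3⟩ := H.legalSeq_append.1 hleg1
  have hres : H.toppleList (H.toppleList η (l.take i)) mid = H.toppleList η (l.take i) := by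
    rw [← H.toppleList_append, ← htj, ← heq]
  have := H.counts_nil_of_fixed hleg3 hres
  have hlen : mid.length = j - i := by
    rw [hmid, List.length_take, List.length_drop]
    omega
  rw [this] at hlen
  simp at hlen
  omega

/-- Any legal sequence from `η` has length bounded in terms of `η`. -/
lemma legal_length_le {η : V → ℕ} {l : List V} (h : H.LegalSeq η l) :
    l.length < (Finset.Icc (fun _ => 0 : V → ℕ) (fun _ => ∑ y, η y)).card := by
  have hmem : ∀ i ∈ Finset.range (l.length + 1),
      H.toppleList η (l.take i) ∈ Finset.Icc (fun _ => 0 : V → ℕ) (fun _ => ∑ y, η y) := by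
    intro i _
    rw [Finset.mem_Icc]
    have hleg : H.LegalSeq η (l.take i) := by
      have : H.LegalSeq η (l.take i ++ l.drop i) := by rw [List.take_append_drop]; exact h
      exact (H.legalSeq_append.1 this).1
    constructor
    · intro x; exact Nat.zero_le _
    · intro x; exact H.toppleList_val_le hleg x
  have hinj : Set.InjOn (fun i => H.toppleList η (l.take i)) (Finset.range (l.length + 1)) := by
    intro i hi j hj hij
    simp only [Finset.coe_range, Set.mem_Iio] at hi hj
    rcases le_total i j with hle | hle
    · exact H.prefix_injective h hle (by omega) hij
    · exact (H.prefix_injective h hle (by omega) hij.symm).symm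
  have := Finset.card_le_card_of_injOn _ hmem hinj
  rw [Finset.card_range] at this
  omega

lemma exists_stabilization (η : V → ℕ) :
    ∃ l : List V, H.LegalSeq η l ∧ H.Stable (H.toppleList η l) := by
  by_contra hcon
  push_neg at hcon
  have grow : ∀ n : ℕ, ∃ l : List V, H.LegalSeq η l ∧ l.length = n := by
    intro n
    induction n with
    | zero => exact ⟨[], trivial, rfl⟩
    | succ n ih =>
      obtain ⟨l, hl, hlen⟩ := ih
      have hunst := hcon l hl
      unfold Stable at hunst
      push_neg at hunst
      obtain ⟨v, hv, hdeg⟩ := hunst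
      refine ⟨l ++ [v], ?_, by simp [hlen]⟩
      rw [H.legalSeq_append]
      exact ⟨hl, hv, hdeg, trivial⟩
  obtain ⟨l, hl, hlen⟩ := grow ((Finset.Icc (fun _ => 0 : V → ℕ) (fun _ => ∑ y, η y)).card)
  have := H.legal_length_le hl
  omega

/-- A nonnegative integer vector with uniformly large discrete Laplacian. -/
lemma exists_strong_vec :
    ∃ n : V → ℕ, n H.sink = 0 ∧
      ∀ x, x ≠ H.sink →
        (∑ u, (n u : ℤ) * H.mult u x) + ((Finset.univ.sup H.deg : ℕ) : ℤ) + 1 ≤ (n x : ℤ) * H.deg x := by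
  set D := Finset.univ.sup H.deg with hD
  set Y : V → ℕ := fun v => if v = H.sink then 0 else H.deg v + D + 1 with hY
  obtain ⟨l, hleg, hstab⟩ := H.exists_stabilization Y
  refine ⟨fun v => l.count v, ?_, ?_⟩
  · exact List.count_eq_zero.2 (fun hmem => (H.mem_ne_sink hleg hmem) rfl)
  · intro x hx
    have hvf := H.value_formula hleg hx
    have hst : H.toppleList Y l x < H.deg x := hstab x hx
    have hYx : Y x = H.deg x + D + 1 := by simp [hY, hx]
    have h0 : (0 : ℤ) ≤ H.toppleList Y l x := Int.ofNat_nonneg _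
    rw [hYx] at hvf
    push_cast at hvf ⊢
    have : (H.toppleList Y l x : ℤ) < H.deg x := by exact_mod_cast hst
    linarith

end SandpileGraph
namespace SandpileGraph

open Finset

variable {V : Type*} [Fintype V] [DecidableEq V] (H : SandpileGraph V)

/-- Grains received from the sink in the burning test. -/
def bvec (H : SandpileGraph V) : V → ℕ := fun v => H.mult v H.sink

lemma nodup_count {l : List V} (h : l.Nodup) (u : V) :
    l.count u = if u ∈ l then 1 else 0 := by
  split_ifs with hm
  · exact List.count_eq_one_of_mem h hm
  · exact List.count_eq_zero_of_not_mem hm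

lemma sum_indicator_mul {T : Finset V} (g : V → ℤ) :
    (∑ u, (if u ∈ T then (1 : ℤ) else 0) * g u) = ∑ u ∈ T, g u := by
  simp only [ite_mul, one_mul, zero_mul]
  rw [Finset.sum_ite_mem, Finset.univ_inter]

lemma value_nodup {η : V → ℕ} {l : List V} (h : H.LegalSeq η l) (hnd : l.Nodup)
    {x : V} (hx : x ≠ H.sink) :
    (H.toppleList η l x : ℤ) = (η x : ℤ) + (∑ u ∈ l.toFinset, (H.mult u x : ℤ))
      - (if x ∈ l then (H.deg x : ℤ) else 0) := by
  rw [H.value_formula h hx]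
  have hc : ∀ u : V, ((l.count u : ℕ) : ℤ) = if u ∈ l.toFinset then (1 : ℤ) else 0 := by
    intro u
    rw [nodup_count hnd u]
    simp only [List.mem_toFinset]
    split_ifs <;> simp
  have : (∑ u, (l.count u : ℤ) * H.mult u x) = ∑ u ∈ l.toFinset, (H.mult u x : ℤ) := by
    rw [← sum_indicator_mul (fun u => (H.mult u x : ℤ))]
    exact Finset.sum_congr rfl (fun u _ => by rw [hc u])
  rw [this, hc x]
  simp only [List.mem_toFinset]
  split_ifs <;> ring

lemma sum_mult_le_deg (S : Finset V) (x : V) :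
    (∑ u ∈ S, (H.mult u x : ℤ)) ≤ (H.deg x : ℤ) := by
  have h1 : (∑ u ∈ S, (H.mult u x : ℤ)) ≤ ∑ u, (H.mult u x : ℤ) :=
    Finset.sum_le_sum_of_subset_of_nonneg (Finset.subset_univ S) (fun u _ _ => Int.ofNat_nonneg _)
  have h2 : (∑ u, (H.mult u x : ℤ)) = (H.deg x : ℤ) := by
    rw [H.deg_eq_sum_in x]
    push_cast
    rfl
  omega

/-- Existence of a full burning sequence from `η + bvec` for an allowed `η`. -/
lemma exists_burning {η : V → ℕ} (hA : H.Allowed η) :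
    ∃ β : List V, β.Nodup ∧ H.LegalSeq (fun v => η v + H.bvec v) β ∧
      ∀ v, v ≠ H.sink → v ∈ β := by
  by_contra hcon
  push_neg at hcon
  set η₀ : V → ℕ := fun v => η v + H.bvec v with hη₀
  have extend : ∀ β : List V, β.Nodup → H.LegalSeq η₀ β →
      ∃ v, v ∉ β ∧ (β ++ [v]).Nodup ∧ H.LegalSeq η₀ (β ++ [v]) := by
    intro β hnd hleg
    obtain ⟨v₀, hv₀s, hv₀m⟩ := hcon β hnd hleg
    set S : Finset V := (Finset.univ.erase H.sink) \ β.toFinset with hS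
    have hv₀S : v₀ ∈ S := by
      rw [hS]
      simp [hv₀s, hv₀m]
    have hSne : S.Nonempty := ⟨v₀, hv₀S⟩
    have hSsink : H.sink ∉ S := by simp [hS]
    obtain ⟨v, hvS, hvle⟩ := hA S hSne hSsink
    have hvs : v ≠ H.sink := by
      intro hh; rw [hh] at hvS; exact hSsink hvS
    have hvβ : v ∉ β := by
      rw [hS] at hvS
      simp only [Finset.mem_sdiff, List.mem_toFinset] at hvS
      exact hvS.2
    -- value of v after β
    have hval : (H.toppleList η₀ β v : ℤ)
        = (η₀ v : ℤ) + ∑ u ∈ β.toFinset, (H.mult u v : ℤ) := by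
      rw [H.value_nodup hleg hnd hvs, if_neg hvβ]
      ring
    -- partition: univ = S ⊎ β.toFinset ⊎ {sink}
    have hsplit : (∑ u ∈ S, (H.mult u v : ℤ)) + (∑ u ∈ β.toFinset, (H.mult u v : ℤ))
        + (H.mult H.sink v : ℤ) = (H.deg v : ℤ) := by
      have hβsub : β.toFinset ⊆ Finset.univ.erase H.sink := by
        intro u hu
        rw [List.mem_toFinset] at hu
        exact Finset.mem_erase.2 ⟨H.mem_ne_sink hleg hu, Finset.mem_univ u⟩
      have hdisj : Disjoint S β.toFinset := Finset.sdiff_disjoint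
      have hunion : S ∪ β.toFinset = Finset.univ.erase H.sink := by
        rw [hS]
        exact Finset.sdiff_union_of_subset hβsub
      have h1 : (∑ u ∈ S, (H.mult u v : ℤ)) + (∑ u ∈ β.toFinset, (H.mult u v : ℤ))
          = ∑ u ∈ Finset.univ.erase H.sink, (H.mult u v : ℤ) := by
        rw [← Finset.sum_union hdisj, hunion]
      have h2 : (H.mult H.sink v : ℤ) + ∑ u ∈ Finset.univ.erase H.sink, (H.mult u v : ℤ)
          = ∑ u, (H.mult u v : ℤ) :=
        Finset.add_sum_erase Finset.univ (fun u => (H.mult u v : ℤ)) (Finset.mem_univ H.sink)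
      have h3 : (∑ u, (H.mult u v : ℤ)) = (H.deg v : ℤ) := by
        rw [H.deg_eq_sum_in v]; push_cast; rfl
      omega
    have hvleS : (∑ u ∈ S.erase v, (H.mult u v : ℤ)) ≤ (η v : ℤ) := by
      exact_mod_cast Nat.cast_le.2 hvle
    have hSv : (∑ u ∈ S, (H.mult u v : ℤ)) = ∑ u ∈ S.erase v, (H.mult u v : ℤ) := by
      rw [← Finset.add_sum_erase S (fun u => (H.mult u v : ℤ)) hvS, H.loopless]
      simp
    have hbv : (η₀ v : ℤ) = (η v : ℤ) + (H.mult v H.sink : ℤ) := by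
      simp [hη₀, bvec]
    have hsymm : (H.mult H.sink v : ℤ) = (H.mult v H.sink : ℤ) := by
      rw [H.symm]
    have hdegle : (H.deg v : ℤ) ≤ (H.toppleList η₀ β v : ℤ) := by
      rw [hval, hbv]
      omega
    refine ⟨v, hvβ, ?_, ?_⟩
    · rw [List.nodup_append]
      exact ⟨hnd, List.nodup_singleton v, by simpa using fun a (ha : a ∈ β) (h : a = v) => hvβ (h ▸ ha)⟩
    · rw [H.legalSeq_append]
      exact ⟨hleg, hvs, by exact_mod_cast hdegle, trivial⟩
  -- grow nodup lists arbitrarily long: contradiction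
  have grow : ∀ n : ℕ, ∃ β : List V, β.Nodup ∧ H.LegalSeq η₀ β ∧ β.length = n := by
    intro n
    induction n with
    | zero => exact ⟨[], List.nodup_nil, trivial, rfl⟩
    | succ n ih =>
      obtain ⟨β, hnd, hleg, hlen⟩ := ih
      obtain ⟨v, _, hnd', hleg'⟩ := extend β hnd hleg
      exact ⟨β ++ [v], hnd', hleg', by simp [hlen]⟩
  obtain ⟨β, hnd, -, hlen⟩ := grow (Fintype.card V + 1)
  have := List.Nodup.length_le_card hnd
  omega

end SandpileGraph
namespace SandpileGraph

open Finset

variable {V : Type*} [Fintype V] [DecidableEq V] (H : SandpileGraph V)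

/-- The reverse-legality property of a burning order w.r.t. `ν`. -/
def burnOK (H : SandpileGraph V) (ν : V → ℕ) : List V → Prop
  | [] => True
  | v :: rest => ((∑ u ∈ rest.toFinset, H.mult u v) ≤ ν v) ∧ H.burnOK ν rest

/-- Validity of untoppling the set `S` in the (reversed) order given by the list. -/
def sweepOK (H : SandpileGraph V) (χ : V → ℕ) : Finset V → List V → Prop
  | S, [] => S = ∅
  | S, v :: rest =>
      if v ∈ S then ((∑ u ∈ S.erase v, H.mult u v) ≤ χ v ∧ H.sweepOK χ (S.erase v) rest)
      else H.sweepOK χ S rest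

lemma burnOK_aux {ν : V → ℕ} :
    ∀ (β : List V) (done : Finset V) (η : V → ℕ), β.Nodup → (∀ v ∈ β, v ∉ done) →
      (done ∪ β.toFinset = Finset.univ.erase H.sink) →
      (∀ x, x ≠ H.sink → x ∉ done → η x = ν x + H.mult x H.sink + ∑ u ∈ done, H.mult u x) →
      H.LegalSeq η β → H.burnOK ν β := by
  intro β
  induction β with
  | nil => intro _ _ _ _ _ _ _; trivial
  | cons v rest ih =>
    intro done η hnd hdis hun hinv hleg
    obtain ⟨hvs, hvd, hlegrest⟩ := hleg
    have hvdone : v ∉ done := hdis v List.mem_cons_self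
    have hvrest : v ∉ rest := (List.nodup_cons.1 hnd).1
    have hηv : η v = ν v + H.mult v H.sink + ∑ u ∈ done, H.mult u v :=
      hinv v hvs hvdone
    constructor
    · -- head condition
      have hpart : (∑ u ∈ done, H.mult u v) + (∑ u ∈ rest.toFinset, H.mult u v)
          + H.mult H.sink v = H.deg v := by
        have hv_not_mem : v ∉ done ∪ rest.toFinset := by
          simp only [Finset.mem_union, List.mem_toFinset]
          tauto
        have hdisj : Disjoint done rest.toFinset := by
          rw [Finset.disjoint_right]
          intro a ha
          rw [List.mem_toFinset] at ha
          exact hdis a (List.mem_cons_of_mem v ha)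
        have h1 : (∑ u ∈ done, H.mult u v) + (∑ u ∈ rest.toFinset, H.mult u v)
            = ∑ u ∈ done ∪ rest.toFinset, H.mult u v := (Finset.sum_union hdisj).symm
        have h2 : insert v (done ∪ rest.toFinset) = Finset.univ.erase H.sink := by
          rw [← hun]
          ext a
          simp only [Finset.mem_insert, Finset.mem_union, List.mem_toFinset, List.toFinset_cons,
            Finset.mem_insert]
          tauto
        have h3 : ∑ u ∈ Finset.univ.erase H.sink, H.mult u v
            = H.mult v v + ∑ u ∈ done ∪ rest.toFinset, H.mult u v := by
          rw [← h2]
          exact Finset.sum_insert hv_not_mem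
        have h4 : H.mult H.sink v + ∑ u ∈ Finset.univ.erase H.sink, H.mult u v
            = ∑ u, H.mult u v :=
          Finset.add_sum_erase Finset.univ (fun u => H.mult u v) (Finset.mem_univ H.sink)
        have h5 : ∑ u, H.mult u v = H.deg v := (H.deg_eq_sum_in v).symm
        have h6 := H.loopless v
        omega
      have hsymm : H.mult H.sink v = H.mult v H.sink := H.symm _ _
      omega
    · -- tail
      refine ih (insert v done) (H.topple v η) (List.nodup_cons.1 hnd).2 ?_ ?_ ?_ hlegrest
      · intro u hu
        simp only [Finset.mem_insert, not_or]
        exact ⟨fun hh => hvrest (hh ▸ hu), fun hh => hdis u (List.mem_cons_of_mem v hu) hh⟩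
      · rw [← hun]
        ext a
        simp only [Finset.mem_union, Finset.mem_insert, List.toFinset_cons, Finset.mem_insert,
          List.mem_toFinset]
        tauto
      · intro x hx hxd
        simp only [Finset.mem_insert, not_or] at hxd
        obtain ⟨hxv, hxdone⟩ := hxd
        have : H.topple v η x = η x + H.mult v x := by simp [topple, hxv, hx]
        rw [this, hinv x hx hxdone, Finset.sum_insert hvdone, H.symm v x]
        ring

lemma exists_burnOK {ν : V → ℕ} (hA : H.Allowed ν) :
    ∃ β : List V, β.Nodup ∧ (∀ v, v ≠ H.sink → v ∈ β) ∧ (∀ v ∈ β, v ≠ H.sink) ∧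
      H.burnOK ν β := by
  obtain ⟨β, hnd, hleg, hcov⟩ := H.exists_burning hA
  have hne : ∀ v ∈ β, v ≠ H.sink := fun v hv => H.mem_ne_sink hleg hv
  refine ⟨β, hnd, hcov, hne, ?_⟩
  refine H.burnOK_aux β ∅ _ hnd (by simp) ?_ (by intro x hx _; simp [bvec]) hleg
  · rw [Finset.empty_union]
    ext a
    simp only [List.mem_toFinset, Finset.mem_erase, Finset.mem_univ, and_true]
    constructor
    · intro ha; exact hne a ha
    · intro ha; exact hcov a ha

lemma sweepOK_of_burnOK {ν χ : V → ℕ} :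
    ∀ (β : List V) (S : Finset V), H.burnOK ν β → S ⊆ β.toFinset →
      (∀ v ∈ S, ν v ≤ χ v) → H.sweepOK χ S β := by
  intro β
  induction β with
  | nil =>
    intro S _ hsub _
    have : S = ∅ := Finset.subset_empty.1 (by simpa using hsub)
    simpa [sweepOK]
  | cons v rest ih =>
    intro S hb hsub hle
    obtain ⟨hhead, htail⟩ := hb
    simp only [sweepOK]
    split_ifs with hvS
    · constructor
      · have h1 : S.erase v ⊆ rest.toFinset := by
          intro x hx
          obtain ⟨hxv, hxS⟩ := Finset.mem_erase.1 hx
          have := hsub hxS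
          simp only [List.toFinset_cons, Finset.mem_insert, List.mem_toFinset] at this
          rcases this with h | h
          · exact absurd h hxv
          · exact List.mem_toFinset.2 h
        calc ∑ u ∈ S.erase v, H.mult u v ≤ ∑ u ∈ rest.toFinset, H.mult u v :=
              Finset.sum_le_sum_of_subset h1
          _ ≤ ν v := hhead
          _ ≤ χ v := hle v hvS
      · refine ih (S.erase v) htail ?_ (fun u hu => hle u (Finset.mem_of_mem_erase hu))
        intro x hx
        obtain ⟨hxv, hxS⟩ := Finset.mem_erase.1 hx
        have := hsub hxS
        simp only [List.toFinset_cons, Finset.mem_insert, List.mem_toFinset] at this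
        rcases this with h | h
        · exact absurd h hxv
        · exact List.mem_toFinset.2 h
    · refine ih S htail ?_ hle
      intro x hx
      have := hsub hx
      simp only [List.toFinset_cons, Finset.mem_insert, List.mem_toFinset] at this
      rcases this with h | h
      · exact absurd (h ▸ hx) hvS
      · exact List.mem_toFinset.2 h

/-- The sweep construction: toppling the set `S` once, in a valid order, leads from a
configuration `χp` (characterised by its Laplacian formula) to `χ`. -/
lemma sweep_play :
    ∀ (β : List V) (S : Finset V) (χ : V → ℕ), (∀ v ∈ β, v ≠ H.sink) →
      H.sweepOK χ S β →
      (∀ x, x ∉ S → x ≠ H.sink → (∑ u ∈ S, H.mult u x) ≤ χ x) →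
      ∃ (χp : V → ℕ) (l : List V), H.LegalSeq χp l ∧ H.toppleList χp l = χ ∧
        χp H.sink = χ H.sink ∧
        ∀ x, x ≠ H.sink → (χp x : ℤ) = (χ x : ℤ) - (∑ u ∈ S, (H.mult u x : ℤ))
          + (if x ∈ S then (H.deg x : ℤ) else 0) := by
  intro β
  induction β with
  | nil =>
    intro S χ _ hOK _
    have hS : S = ∅ := hOK
    subst hS
    exact ⟨χ, [], trivial, rfl, rfl, by simp⟩
  | cons v rest ih =>
    intro S χ hns hOK hspec
    have hvs : v ≠ H.sink := hns v List.mem_cons_self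
    have hnsrest : ∀ u ∈ rest, u ≠ H.sink := fun u hu => hns u (List.mem_cons_of_mem v hu)
    simp only [sweepOK] at hOK
    by_cases hvS : v ∈ S
    · rw [if_pos hvS] at hOK
      obtain ⟨hpre, hOK'⟩ := hOK
      set S' := S.erase v with hS'
      have hspec' : ∀ x, x ∉ S' → x ≠ H.sink → (∑ u ∈ S', H.mult u x) ≤ χ x := by
        intro x hxS' hxs
        by_cases hxv : x = v
        · subst hxv; exact hpre
        · have hxS : x ∉ S := by
            intro hh
            exact hxS' (Finset.mem_erase.2 ⟨hxv, hh⟩)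
          calc ∑ u ∈ S', H.mult u x ≤ ∑ u ∈ S, H.mult u x :=
                Finset.sum_le_sum_of_subset (Finset.erase_subset v S)
            _ ≤ χ x := hspec x hxS hxs
      obtain ⟨χq, l', hleg', hres', hsink', hform'⟩ := ih S' χ hnsrest hOK' hspec'
      -- sum identities
      have hSsum : ∀ x : V, (∑ u ∈ S, (H.mult u x : ℤ))
          = (∑ u ∈ S', (H.mult u x : ℤ)) + H.mult v x := by
        intro x
        rw [hS', ← Finset.add_sum_erase S (fun u => (H.mult u x : ℤ)) hvS]
        ring
      -- validity bound
      have hval : ∀ x, x ≠ v → x ≠ H.sink → (H.mult v x : ℤ) ≤ (χq x : ℤ) := by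
        intro x hxv hxs
        rw [hform' x hxs]
        by_cases hxS' : x ∈ S'
        · rw [if_pos hxS']
          have h1 : (∑ u ∈ S, (H.mult u x : ℤ)) ≤ (H.deg x : ℤ) := H.sum_mult_le_deg S x
          have h2 := hSsum x
          have h3 : (0 : ℤ) ≤ χ x := Int.ofNat_nonneg _
          omega
        · rw [if_neg hxS']
          have hxS : x ∉ S := by
            intro hh
            exact hxS' (Finset.mem_erase.2 ⟨hxv, hh⟩)
          have h1 : (∑ u ∈ S, (H.mult u x : ℤ)) ≤ (χ x : ℤ) := by
            exact_mod_cast Nat.cast_le.2 (hspec x hxS hxs)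
          have h2 := hSsum x
          omega
      have hvalN : ∀ x, x ≠ v → x ≠ H.sink → H.mult v x ≤ χq x := by
        intro x h1 h2; exact_mod_cast hval x h1 h2
      set χp : V → ℕ := fun x => if x = v then χq v + H.deg v
        else if x = H.sink then χq x else χq x - H.mult v x with hχp
      have hpv : χp v = χq v + H.deg v := by simp [hχp]
      have hpsink : χp H.sink = χq H.sink := by simp [hχp, Ne.symm hvs]
      have hpother : ∀ x, x ≠ v → x ≠ H.sink → χp x = χq x - H.mult v x := by
        intro x h1 h2; simp [hχp, h1, h2]
      have htop : H.topple v χp = χq := by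
        funext y
        by_cases h1 : y = v
        · subst h1
          have : H.topple y χp y = χp y - H.deg y := by simp [topple]
          rw [this, hpv]
          omega
        · by_cases h2 : y = H.sink
          · subst h2
            have : H.topple v χp H.sink = χp H.sink := by simp [topple, h1]
            rw [this, hpsink]
          · have : H.topple v χp y = χp y + H.mult v y := by simp [topple, h1, h2]
            rw [this, hpother y h1 h2]
            have := hvalN y h1 h2
            omega
      refine ⟨χp, v :: l', ⟨hvs, ?_, ?_⟩, ?_, ?_, ?_⟩
      · rw [hpv]; omega
      · rw [htop]; exact hleg'
      · simp only [toppleList]; rw [htop]; exact hres'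
      · rw [hpsink, hsink']
      · intro x hxs
        by_cases hxv : x = v
        · subst hxv
          rw [hpv]
          push_cast
          rw [hform' x (by exact hxs), if_neg (Finset.notMem_erase x S)]
          rw [hSsum x, H.loopless]
          push_cast
          rw [if_pos hvS]
          ring
        · rw [hpother x hxv hxs]
          have hv := hvalN x hxv hxs
          have hcast : ((χq x - H.mult v x : ℕ) : ℤ) = (χq x : ℤ) - H.mult v x := by
            omega
          rw [hcast, hform' x hxs, hSsum x]
          have hiff : x ∈ S' ↔ x ∈ S := by
            rw [hS', Finset.mem_erase]
            exact ⟨fun h => h.2, fun h => ⟨hxv, h⟩⟩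
          by_cases hxS : x ∈ S
          · rw [if_pos (hiff.2 hxS), if_pos hxS]; ring
          · rw [if_neg (fun h => hxS (hiff.1 h)), if_neg hxS]; ring
    · rw [if_neg hvS] at hOK
      exact ih S χ hnsrest hOK hspec

end SandpileGraph
namespace SandpileGraph

open Finset

variable {V : Type*} [Fintype V] [DecidableEq V] (H : SandpileGraph V)

lemma reach_lemma {ν : V → ℕ} (hA : H.Allowed ν) :
    ∃ g : V → ℕ, g H.sink = 0 ∧ (∀ x, x ≠ H.sink → 1 ≤ g x) ∧
      ∀ s : ℕ, ∃ l, H.LegalSeq (fun x => ν x + s * g x) l ∧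
        H.toppleList (fun x => ν x + s * g x) l = ν := by
  classical
  obtain ⟨n, hn0, hnstrong⟩ := H.exists_strong_vec
  set D : ℕ := Finset.univ.sup H.deg with hD
  set gZ : V → ℤ := fun x => (n x : ℤ) * H.deg x - ∑ u, (n u : ℤ) * H.mult u x with hgZ
  have hgD : ∀ x, x ≠ H.sink → (D : ℤ) + 1 ≤ gZ x := by
    intro x hx
    have := hnstrong x hx
    simp only [hgZ]
    omega
  set fZ : ℕ → V → ℤ :=
    fun r x => ((min (n x) r : ℕ) : ℤ) * H.deg x - ∑ u, ((min (n u) r : ℕ) : ℤ) * H.mult u x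
    with hfZ
  have hf0 : ∀ x, fZ 0 x = 0 := by intro x; simp [hfZ]
  have hstep : ∀ r x, fZ (r+1) x = fZ r x + ((if r+1 ≤ n x then (H.deg x : ℤ) else 0)
      - ∑ u ∈ Finset.univ.filter (fun v => r+1 ≤ n v), (H.mult u x : ℤ)) := by
    intro r x
    have hmin : ∀ a : ℕ, ((min a (r+1) : ℕ) : ℤ)
        = ((min a r : ℕ) : ℤ) + (if r+1 ≤ a then 1 else 0) := by
      intro a; split_ifs with h <;> omega
    simp only [hfZ]
    rw [Finset.sum_filter]
    have h1 : (∑ u, ((min (n u) (r+1) : ℕ) : ℤ) * H.mult u x)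
        = (∑ u, ((min (n u) r : ℕ) : ℤ) * H.mult u x)
          + ∑ u, (if r+1 ≤ n u then (H.mult u x : ℤ) else 0) := by
      rw [← Finset.sum_add_distrib]
      refine Finset.sum_congr rfl (fun u _ => ?_)
      rw [hmin (n u)]
      split_ifs <;> ring
    rw [h1, hmin (n x)]
    split_ifs <;> ring
  have hsum_le : ∀ (S : Finset V) x, (∑ u ∈ S, (H.mult u x : ℤ)) ≤ (H.deg x : ℤ) :=
    fun S x => H.sum_mult_le_deg S x
  have hsum_nonneg : ∀ (S : Finset V) x, (0:ℤ) ≤ ∑ u ∈ S, (H.mult u x : ℤ) :=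
    fun S x => Finset.sum_nonneg (fun u _ => Int.ofNat_nonneg _)
  set R : ℕ := Finset.univ.sup n with hR
  have hfR : ∀ r, R ≤ r → ∀ x, fZ r x = gZ x := by
    intro r hr x
    have hm : ∀ u : V, min (n u) r = n u := by
      intro u
      have : n u ≤ R := Finset.le_sup (Finset.mem_univ u)
      omega
    simp only [hfZ, hgZ, hm]
  have hdown : ∀ r x, n x ≤ r → ∀ k, fZ (r + k) x ≤ fZ r x := by
    intro r x hnx k
    induction k with
    | zero => exact le_refl _
    | succ k ih =>
      have := hstep (r + k) x
      rw [show r + (k+1) = (r+k) + 1 by ring, this]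
      have h2 : ¬(r + k + 1 ≤ n x) := by omega
      rw [if_neg h2]
      have := hsum_nonneg (Finset.univ.filter (fun v => r + k + 1 ≤ n v)) x
      omega
  have hged : ∀ r x, x ≠ H.sink → n x ≤ r → gZ x ≤ fZ r x := by
    intro r x hx hnx
    have h1 := hdown r x hnx R
    have h2 := hfR (r + R) (by omega) x
    omega
  have hfnonneg : ∀ r x, x ≠ H.sink → 0 ≤ fZ r x := by
    intro r
    induction r with
    | zero => intro x hx; rw [hf0]
    | succ r ih =>
      intro x hx
      by_cases hc : r + 1 ≤ n x
      · have := hstep r x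
        rw [if_pos hc] at this
        have h2 := hsum_le (Finset.univ.filter (fun v => r + 1 ≤ n v)) x
        have h3 := ih x hx
        omega
      · have := hged (r+1) x hx (by omega)
        have := hgD x hx
        omega
  -- the configuration ladder
  set cfg : ℕ → V → ℕ := fun r x => if x = H.sink then ν x else ((ν x : ℤ) + fZ r x).toNat
    with hcfg
  have hcfg_cast : ∀ r x, x ≠ H.sink → (cfg r x : ℤ) = (ν x : ℤ) + fZ r x := by
    intro r x hx
    simp only [hcfg, if_neg hx]
    exact Int.toNat_of_nonneg (by have := hfnonneg r x hx; omega)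
  have hcfg_sink : ∀ r, cfg r H.sink = ν H.sink := by intro r; simp [hcfg]
  have hcfg0 : cfg 0 = ν := by
    funext x
    by_cases hx : x = H.sink
    · rw [hx]; exact hcfg_sink 0
    · have := hcfg_cast 0 x hx
      rw [hf0] at this
      omega
  set g : V → ℕ := fun x => if x = H.sink then 0 else (gZ x).toNat with hg
  have hg1 : ∀ x, x ≠ H.sink → 1 ≤ g x := by
    intro x hx
    have := hgD x hx
    simp only [hg, if_neg hx]
    omega
  have hcfgR : cfg R = fun x => ν x + g x := by
    funext x
    by_cases hx : x = H.sink
    · rw [hx, hcfg_sink R]; simp [hg]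
    · have h1 := hcfg_cast R x hx
      rw [hfR R (le_refl R) x] at h1
      have h2 := hgD x hx
      simp only [hg, if_neg hx]
      omega
  -- burning order
  obtain ⟨β, hβnd, hβcov, hβns, hβOK⟩ := H.exists_burnOK hA
  -- stage plays
  have hplay : ∀ r, ∃ l, H.LegalSeq (cfg r) l ∧ H.toppleList (cfg r) l = ν := by
    intro r
    induction r with
    | zero => exact ⟨[], trivial, by rw [← hcfg0]; rfl⟩
    | succ r ih =>
      obtain ⟨l₀, hleg₀, hres₀⟩ := ih
      set S : Finset V := Finset.univ.filter (fun v => r + 1 ≤ n v) with hS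
      have hSsink : ∀ v ∈ S, v ≠ H.sink := by
        intro v hv
        rw [hS, Finset.mem_filter] at hv
        intro hh
        rw [hh, hn0] at hv
        omega
      have hsub : S ⊆ β.toFinset := by
        intro v hv
        exact List.mem_toFinset.2 (hβcov v (hSsink v hv))
      have hle : ∀ v ∈ S, ν v ≤ cfg r v := by
        intro v hv
        have h1 := hcfg_cast r v (hSsink v hv)
        have h2 := hfnonneg r v (hSsink v hv)
        omega
      have hOK := H.sweepOK_of_burnOK β S hβOK hsub hle
      have hspec : ∀ x, x ∉ S → x ≠ H.sink → (∑ u ∈ S, H.mult u x) ≤ cfg r x := by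
        intro x hxS hxs
        have hnx : n x ≤ r := by
          by_contra hcon
          exact hxS (by rw [hS, Finset.mem_filter]; exact ⟨Finset.mem_univ x, by omega⟩)
        have h1 := hged r x hxs hnx
        have h2 := hgD x hxs
        have h3 := hcfg_cast r x hxs
        have h4 : (H.deg x : ℤ) ≤ D := by
          exact_mod_cast Nat.cast_le.2 (Finset.le_sup (f := H.deg) (Finset.mem_univ x))
        have h5 := hsum_le S x
        have h6 : ((∑ u ∈ S, H.mult u x : ℕ) : ℤ) = ∑ u ∈ S, (H.mult u x : ℤ) := by push_cast; rfl
        omega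
      obtain ⟨χp, l₁, hleg₁, hres₁, hsinkp, hform⟩ := H.sweep_play β S (cfg r) hβns hOK hspec
      have hχp : χp = cfg (r+1) := by
        funext x
        by_cases hx : x = H.sink
        · rw [hx, hsinkp, hcfg_sink r, hcfg_sink (r+1)]
        · have h1 := hform x hx
          have h2 := hcfg_cast r x hx
          have h3 := hcfg_cast (r+1) x hx
          have h4 := hstep r x
          have h5 : (if x ∈ S then (H.deg x : ℤ) else 0)
              = (if r+1 ≤ n x then (H.deg x : ℤ) else 0) := by
            by_cases hc : r + 1 ≤ n x
            · rw [if_pos hc, if_pos (by rw [hS, Finset.mem_filter]; exact ⟨Finset.mem_univ x, hc⟩)]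
            · rw [if_neg hc, if_neg (by rw [hS, Finset.mem_filter]; tauto)]
          rw [h5] at h1
          have : (χp x : ℤ) = (cfg (r+1) x : ℤ) := by
            rw [h1, h2, h3, h4, hS]
            ring
          exact_mod_cast this
      refine ⟨l₁ ++ l₀, ?_, ?_⟩
      · rw [H.legalSeq_append, ← hχp]
        exact ⟨hleg₁, by rw [hres₁]; exact hleg₀⟩
      · rw [H.toppleList_append, ← hχp, hres₁]
        exact hres₀
  -- multi-stage plays
  refine ⟨g, by simp [hg], hg1, ?_⟩
  intro s
  induction s with
  | zero =>
    refine ⟨[], trivial, ?_⟩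
    show (fun x => ν x + 0 * g x) = ν
    funext x; omega
  | succ s ih =>
    obtain ⟨l₀, hleg₀, hres₀⟩ := ih
    obtain ⟨l₁, hleg₁, hres₁⟩ := hplay R
    rw [hcfgR] at hleg₁ hres₁
    have hδ := H.legalSeq_add (fun x => s * g x) hleg₁
    have heq : ((fun x => ν x + g x) + fun x => s * g x) = (fun x => ν x + (s+1) * g x) := by
      funext x; simp only [Pi.add_apply]; ring
    have heq2 : ((fun x => ν x + s * g x)) = (H.toppleList (fun x => ν x + g x) l₁ + fun x => s * g x) := by
      rw [hres₁]
      funext x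
      simp only [Pi.add_apply]
    refine ⟨l₁ ++ l₀, ?_, ?_⟩
    · rw [H.legalSeq_append]
      constructor
      · rw [← heq]; exact hδ.1
      · rw [← heq, hδ.2, ← heq2]; exact hleg₀
    · rw [H.toppleList_append, ← heq, hδ.2, ← heq2, hres₀]

/-- An allowed stable configuration vanishing at the sink is recurrent. -/
lemma recurrent_of_allowed {ν : V → ℕ} (h0 : ν H.sink = 0) (hst : H.Stable ν)
    (hA : H.Allowed ν) : H.Recurrent ν := by
  refine ⟨h0, hst, ?_⟩
  intro ξ hξ
  obtain ⟨g, hg0, hg1, hplays⟩ := H.reach_lemma hA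
  set s : ℕ := Finset.univ.sup ξ with hs
  obtain ⟨l, hleg, hres⟩ := hplays s
  have hdom : ∀ x, ξ x ≤ ν x + s * g x := by
    intro x
    by_cases hx : x = H.sink
    · rw [hx, hξ]; omega
    · have h1 : ξ x ≤ s := Finset.le_sup (Finset.mem_univ x)
      have h2 := hg1 x hx
      have : s ≤ s * g x := Nat.le_mul_of_pos_right s h2
      omega
  refine ⟨fun x => ν x + s * g x - ξ x, ?_, l, ?_, ?_, ?_⟩
  · show ν H.sink + s * g H.sink - ξ H.sink = 0
    rw [hξ, h0, hg0]
    omega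
  · have : (ξ + fun x => ν x + s * g x - ξ x) = (fun x => ν x + s * g x) := by
      funext x
      simp only [Pi.add_apply]
      have := hdom x
      omega
    rw [this]; exact hleg
  · have : (ξ + fun x => ν x + s * g x - ξ x) = (fun x => ν x + s * g x) := by
      funext x
      simp only [Pi.add_apply]
      have := hdom x
      omega
    rw [this]; exact hres
  · have : (ξ + fun x => ν x + s * g x - ξ x) = (fun x => ν x + s * g x) := by
      funext x
      simp only [Pi.add_apply]
      have := hdom x
      omega
    rw [this, hres]
    exact hst

end SandpileGraph
namespace SandpileGraph

open Finset

variable {V : Type*} [Fintype V] [DecidableEq V] (H : SandpileGraph V)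

/-- The shape of configurations in `R_{H'} \ R_H`. -/
def WaveForm (H : SandpileGraph V) (w : V) (η : V → ℕ) : Prop :=
  H.Allowed η ∧ η H.sink = 0 ∧ (∀ v, v ≠ H.sink → v ≠ w → η v < H.deg v) ∧ η w = H.deg w

lemma exists_wave {w : V} {η : V → ℕ} (hw : w ≠ H.sink) (hform : H.WaveForm w η) :
    ∃ l, H.IsWaveList w η l := by
  obtain ⟨hA, h0, hst, hww⟩ := hform
  by_contra hcon
  push_neg at hcon
  have extend : ∀ l, l.Nodup → w ∈ l → H.LegalSeq η l →
      ∃ v, v ∉ l ∧ (l ++ [v]).Nodup ∧ w ∈ l ++ [v] ∧ H.LegalSeq η (l ++ [v]) := by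
    intro l hnd hwl hleg
    have hnw := hcon l
    unfold IsWaveList at hnw
    push_neg at hnw
    obtain ⟨v, hvs, hvw, hvge⟩ := hnw hnd hwl hleg
    have hvl : v ∉ l := by
      intro hvl
      have := H.value_nodup hleg hnd hvs
      rw [if_pos hvl] at this
      have h1 : (∑ u ∈ l.toFinset, (H.mult u v : ℤ)) ≤ (H.deg v : ℤ) :=
        H.sum_mult_le_deg _ v
      have h2 : (η v : ℤ) < H.deg v := by exact_mod_cast hst v hvs hvw
      have h3 : (H.deg v : ℤ) ≤ H.toppleList η l v := by exact_mod_cast hvge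
      omega
    refine ⟨v, hvl, ?_, ?_, ?_⟩
    · rw [List.nodup_append]
      exact ⟨hnd, List.nodup_singleton v, by simpa using fun a (ha : a ∈ l) (h : a = v) => hvl (h ▸ ha)⟩
    · exact List.mem_append_left _ hwl
    · rw [H.legalSeq_append]
      exact ⟨hleg, hvs, hvge, trivial⟩
  have grow : ∀ k : ℕ, ∃ l : List V, l.Nodup ∧ w ∈ l ∧ H.LegalSeq η l ∧ l.length = k + 1 := by
    intro k
    induction k with
    | zero =>
      refine ⟨[w], List.nodup_singleton w, List.mem_singleton_self w, ⟨hw, ?_, trivial⟩, rfl⟩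
      omega
    | succ k ih =>
      obtain ⟨l, hnd, hwl, hleg, hlen⟩ := ih
      obtain ⟨v, _, hnd', hw', hleg'⟩ := extend l hnd hwl hleg
      exact ⟨l ++ [v], hnd', hw', hleg', by simp [hlen]⟩
  obtain ⟨l, hnd, -, -, hlen⟩ := grow (Fintype.card V)
  have := List.Nodup.length_le_card hnd
  omega

lemma wave_result_w {w : V} {η : V → ℕ} {l : List V} (hw : w ≠ H.sink)
    (hform : H.WaveForm w η) (hl : H.IsWaveList w η l) :
    (H.toppleList η l w : ℤ) = ∑ u ∈ l.toFinset.erase w, (H.mult u w : ℤ) := by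
  obtain ⟨hnd, hwl, hleg, _⟩ := hl
  have := H.value_nodup hleg hnd hw
  rw [if_pos hwl, hform.2.2.2] at this
  rw [this]
  have h2 : (H.mult w w : ℤ) + ∑ u ∈ l.toFinset.erase w, (H.mult u w : ℤ)
      = ∑ u ∈ l.toFinset, (H.mult u w : ℤ) :=
    Finset.add_sum_erase l.toFinset (fun u => (H.mult u w : ℤ)) (List.mem_toFinset.2 hwl)
  rw [H.loopless] at h2
  push_cast at h2
  omega

lemma wave_last_result {w : V} {η : V → ℕ} {l : List V} (hw : w ≠ H.sink)
    (hform : H.WaveForm w η) (hl : H.IsWaveList w η l) {y : V} (hy : 0 < H.mult w y)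
    (hyl : y ∉ l) : H.toppleList η l w < H.deg w := by
  have hres := H.wave_result_w hw hform hl
  have hyw : y ≠ w := by
    intro hh; rw [hh, H.loopless] at hy; omega
  have hsub : l.toFinset.erase w ⊆ Finset.univ.erase y := by
    intro u hu
    obtain ⟨huw, hul⟩ := Finset.mem_erase.1 hu
    refine Finset.mem_erase.2 ⟨?_, Finset.mem_univ u⟩
    intro hh
    exact hyl (hh ▸ (List.mem_toFinset.1 hul))
  have h1 : (∑ u ∈ l.toFinset.erase w, (H.mult u w : ℤ))
      ≤ ∑ u ∈ Finset.univ.erase y, (H.mult u w : ℤ) :=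
    Finset.sum_le_sum_of_subset_of_nonneg hsub (fun u _ _ => Int.ofNat_nonneg _)
  have h2 : (H.mult y w : ℤ) + ∑ u ∈ Finset.univ.erase y, (H.mult u w : ℤ)
      = ∑ u, (H.mult u w : ℤ) :=
    Finset.add_sum_erase Finset.univ (fun u => (H.mult u w : ℤ)) (Finset.mem_univ y)
  have h3 : (∑ u, (H.mult u w : ℤ)) = (H.deg w : ℤ) := by
    rw [H.deg_eq_sum_in w]; push_cast; rfl
  have h4 : 0 < (H.mult y w : ℤ) := by rw [H.symm]; exact_mod_cast hy
  have : (H.toppleList η l w : ℤ) < (H.deg w : ℤ) := by omega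
  exact_mod_cast this

lemma wave_full_result {w : V} {η : V → ℕ} {l : List V} (hw : w ≠ H.sink)
    (hform : H.WaveForm w η) (hl : H.IsWaveList w η l)
    (hno : ∀ y, 0 < H.mult w y → y ∈ l) : H.toppleList η l w = H.deg w := by
  have hres := H.wave_result_w hw hform hl
  have hfull : (∑ u ∈ l.toFinset.erase w, (H.mult u w : ℤ)) = ∑ u, (H.mult u w : ℤ) := by
    refine Finset.sum_subset (Finset.subset_univ _) ?_
    intro u _ hu
    by_cases huw : u = w
    · rw [huw, H.loopless]; rfl
    · have : u ∉ l := by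
        intro hul
        exact hu (Finset.mem_erase.2 ⟨huw, List.mem_toFinset.2 hul⟩)
      have : ¬(0 < H.mult w u) := fun hh => this (hno u hh)
      have : H.mult w u = 0 := by omega
      rw [H.symm] at this
      rw [this]; rfl
  have h3 : (∑ u, (H.mult u w : ℤ)) = (H.deg w : ℤ) := by
    rw [H.deg_eq_sum_in w]; push_cast; rfl
  have : (H.toppleList η l w : ℤ) = (H.deg w : ℤ) := by omega
  exact_mod_cast this

/-- One inclusion for injectivity of the wave step. -/
lemma wave_inj_subset {w : V} {η η' : V → ℕ} {l l' : List V} (hw : w ≠ H.sink)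
    (hform : H.WaveForm w η) (hform' : H.WaveForm w η')
    (hl : H.IsWaveList w η l) (hl' : H.IsWaveList w η' l')
    (heq : H.toppleList η l = H.toppleList η' l') : l.toFinset ⊆ l'.toFinset := by
  obtain ⟨hnd, hwl, hleg, _⟩ := hl
  obtain ⟨hnd', hwl', hleg', _⟩ := hl'
  by_contra hsub
  have hSne : (l.toFinset \ l'.toFinset).Nonempty := by
    rw [Finset.sdiff_nonempty]
    exact hsub
  have hSsink : H.sink ∉ l.toFinset \ l'.toFinset := by
    intro hh
    have := (Finset.mem_sdiff.1 hh).1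
    exact (H.mem_ne_sink hleg (List.mem_toFinset.1 this)) rfl
  obtain ⟨v, hvS, hvle⟩ := hform'.1 (l.toFinset \ l'.toFinset) hSne hSsink
  obtain ⟨hvA, hvB⟩ := Finset.mem_sdiff.1 hvS
  have hvw : v ≠ w := by
    intro hh
    exact hvB (hh ▸ (List.mem_toFinset.2 hwl'))
  have hvs : v ≠ H.sink := H.mem_ne_sink hleg (List.mem_toFinset.1 hvA)
  -- value identities
  have h1 : (H.toppleList η l v : ℤ) = (η v : ℤ) + (∑ u ∈ l.toFinset, (H.mult u v : ℤ)) - H.deg v := by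
    have := H.value_nodup hleg hnd hvs
    rw [if_pos (List.mem_toFinset.1 hvA)] at this
    omega
  have h2 : (H.toppleList η' l' v : ℤ) = (η' v : ℤ) + (∑ u ∈ l'.toFinset, (H.mult u v : ℤ)) := by
    have := H.value_nodup hleg' hnd' hvs
    rw [if_neg (fun hh => hvB (List.mem_toFinset.2 hh))] at this
    omega
  have h3 : (η v : ℤ) < H.deg v := by exact_mod_cast hform.2.2.1 v hvs hvw
  -- sum splitting
  have hsplitA : (∑ u ∈ l.toFinset, (H.mult u v : ℤ))
      = (∑ u ∈ l.toFinset \ l'.toFinset, (H.mult u v : ℤ)) + ∑ u ∈ l.toFinset ∩ l'.toFinset, (H.mult u v : ℤ) := by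
    rw [← Finset.sum_union (Finset.disjoint_sdiff_inter l.toFinset l'.toFinset), Finset.sdiff_union_inter]
  have hinterB : (∑ u ∈ l.toFinset ∩ l'.toFinset, (H.mult u v : ℤ)) ≤ ∑ u ∈ l'.toFinset, (H.mult u v : ℤ) :=
    Finset.sum_le_sum_of_subset_of_nonneg (Finset.inter_subset_right)
      (fun u _ _ => Int.ofNat_nonneg _)
  have hSv : (∑ u ∈ l.toFinset \ l'.toFinset, (H.mult u v : ℤ)) = ∑ u ∈ (l.toFinset \ l'.toFinset).erase v, (H.mult u v : ℤ) := by
    rw [← Finset.add_sum_erase (l.toFinset \ l'.toFinset) (fun u => (H.mult u v : ℤ)) hvS, H.loopless]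
    simp
  have hvle' : (∑ u ∈ (l.toFinset \ l'.toFinset).erase v, (H.mult u v : ℤ)) ≤ (η' v : ℤ) := by
    exact_mod_cast Nat.cast_le.2 hvle
  have hνeq : (H.toppleList η l v : ℤ) = (H.toppleList η' l' v : ℤ) := by rw [heq]
  omega

/-- Injectivity of the wave step. -/
lemma wave_inj {w : V} {η η' : V → ℕ} {l l' : List V} (hw : w ≠ H.sink)
    (hform : H.WaveForm w η) (hform' : H.WaveForm w η')
    (hl : H.IsWaveList w η l) (hl' : H.IsWaveList w η' l')
    (heq : H.toppleList η l = H.toppleList η' l') : η = η' := by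
  have hAB : l.toFinset = l'.toFinset :=
    Finset.Subset.antisymm
      (H.wave_inj_subset hw hform hform' hl hl' heq)
      (H.wave_inj_subset hw hform' hform hl' hl heq.symm)
  funext x
  by_cases hx : x = H.sink
  · rw [hx, hform.2.1, hform'.2.1]
  · have h1 := H.value_nodup hl.2.2.1 hl.1 hx
    have h2 := H.value_nodup hl'.2.2.1 hl'.1 hx
    have hmem : (x ∈ l) ↔ (x ∈ l') := by
      rw [← List.mem_toFinset, ← List.mem_toFinset, hAB]
    have : (η x : ℤ) = (η' x : ℤ) := by
      rw [heq, hAB] at h1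
      by_cases hxl : x ∈ l
      · rw [if_pos hxl] at h1
        rw [if_pos (hmem.1 hxl)] at h2
        omega
      · rw [if_neg hxl] at h1
        rw [if_neg (fun hh => hxl (hmem.2 hh))] at h2
        omega
    exact_mod_cast this

end SandpileGraph
namespace SandpileGraph

open Finset

variable {V : Type*} [Fintype V] [DecidableEq V] (H : SandpileGraph V)

/-- A configuration obtained by a full (non-last) wave, with its `w`-value lowered,
is never allowed. -/
lemma wave_result_not_lift {w : V} {η ζ : V → ℕ} {l : List V} (hw : w ≠ H.sink)
    (hform : H.WaveForm w η) (hl : H.IsWaveList w η l)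
    (hno : ∀ y, 0 < H.mult w y → y ∈ l) (hζA : H.Allowed ζ)
    (hζeq : ∀ v, v ≠ w → ζ v = H.toppleList η l v) (hζw : ζ w < H.deg w) : False := by
  obtain ⟨hnd, hwl, hleg, hstab⟩ := hl
  have hSne : l.toFinset.Nonempty := ⟨w, List.mem_toFinset.2 hwl⟩
  have hSsink : H.sink ∉ l.toFinset := by
    intro hh
    exact (H.mem_ne_sink hleg (List.mem_toFinset.1 hh)) rfl
  obtain ⟨v, hvS, hvle⟩ := hζA l.toFinset hSne hSsink
  have hvs : v ≠ H.sink := H.mem_ne_sink hleg (List.mem_toFinset.1 hvS)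
  by_cases hvw : v = w
  · subst hvw
    have h1 := H.wave_result_w hw hform ⟨hnd, hwl, hleg, hstab⟩
    have h2 := H.wave_full_result hw hform ⟨hnd, hwl, hleg, hstab⟩ hno
    have h3 : (∑ u ∈ l.toFinset.erase v, (H.mult u v : ℤ)) = (H.deg v : ℤ) := by
      rw [← h1, h2]
    have h4 : ((∑ u ∈ l.toFinset.erase v, H.mult u v : ℕ) : ℤ)
        = ∑ u ∈ l.toFinset.erase v, (H.mult u v : ℤ) := by push_cast; rfl
    have h5 : H.deg v ≤ ζ v := by
      have : ((H.deg v : ℕ) : ℤ) ≤ (ζ v : ℤ) := by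
        rw [← h3, ← h4]
        exact_mod_cast Nat.cast_le.2 hvle
      exact_mod_cast this
    omega
  · have hζv := hζeq v hvw
    have hval := H.value_nodup hleg hnd hvs
    rw [if_pos (List.mem_toFinset.1 hvS)] at hval
    have h3 : (η v : ℤ) < H.deg v := by exact_mod_cast hform.2.2.1 v hvs hvw
    have hsplit : (∑ u ∈ l.toFinset, (H.mult u v : ℤ))
        = ∑ u ∈ l.toFinset.erase v, (H.mult u v : ℤ) := by
      rw [← Finset.add_sum_erase l.toFinset (fun u => (H.mult u v : ℤ)) hvS, H.loopless]
      simp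
    have h6 : (∑ u ∈ l.toFinset.erase v, (H.mult u v : ℤ)) ≤ (ζ v : ℤ) := by
      have h4 : ((∑ u ∈ l.toFinset.erase v, H.mult u v : ℕ) : ℤ)
          = ∑ u ∈ l.toFinset.erase v, (H.mult u v : ℤ) := by push_cast; rfl
      rw [← h4]
      exact_mod_cast Nat.cast_le.2 hvle
    have h7 : (ζ v : ℤ) = (H.toppleList η l v : ℤ) := by rw [hζv]
    omega

end SandpileGraph
namespace SandpileGraph

open Finset

variable {V : Type*} [Fintype V] [DecidableEq V]

section TwoGraphs

variable (H H' : SandpileGraph V) (w : V)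

/-- Multiplicities agree off the sink. -/
lemma mult_eq_off (hmult : ∀ x y, H'.mult x y = H.mult x y +
      (if (x = w ∧ y = H.sink) ∨ (x = H.sink ∧ y = w) then 1 else 0))
    {u v : V} (hu : u ≠ H.sink) (hv : v ≠ H.sink) : H'.mult u v = H.mult u v := by
  rw [hmult u v, if_neg, add_zero]
  rintro (⟨-, h⟩ | ⟨h, -⟩)
  · exact hv h
  · exact hu h

lemma deg_eq_off (hw : w ≠ H.sink)
    (hmult : ∀ x y, H'.mult x y = H.mult x y +
      (if (x = w ∧ y = H.sink) ∨ (x = H.sink ∧ y = w) then 1 else 0))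
    {v : V} (hvw : v ≠ w) (hvs : v ≠ H.sink) : H'.deg v = H.deg v := by
  unfold deg
  refine Finset.sum_congr rfl (fun y _ => ?_)
  rw [hmult v y, if_neg, add_zero]
  rintro (⟨h, -⟩ | ⟨h, -⟩)
  · exact hvw h
  · exact hvs h

lemma deg_eq_w (hw : w ≠ H.sink)
    (hmult : ∀ x y, H'.mult x y = H.mult x y +
      (if (x = w ∧ y = H.sink) ∨ (x = H.sink ∧ y = w) then 1 else 0)) :
    H'.deg w = H.deg w + 1 := by
  unfold deg
  have : ∀ y : V, H'.mult w y = H.mult w y + (if y = H.sink then 1 else 0) := by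
    intro y
    rw [hmult w y]
    congr 1
    by_cases hy : y = H.sink
    · rw [if_pos (Or.inl ⟨rfl, hy⟩), if_pos hy]
    · rw [if_neg, if_neg hy]
      rintro (⟨-, h⟩ | ⟨h, -⟩)
      · exact hy h
      · exact hw h
  rw [Finset.sum_congr rfl (fun y _ => this y), Finset.sum_add_distrib,
    Finset.sum_ite_eq' Finset.univ H.sink (fun _ => 1)]
  simp

lemma allowed_iff (hsink : H'.sink = H.sink)
    (hmult : ∀ x y, H'.mult x y = H.mult x y +
      (if (x = w ∧ y = H.sink) ∨ (x = H.sink ∧ y = w) then 1 else 0))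
    (η : V → ℕ) : H.Allowed η ↔ H'.Allowed η := by
  have key : ∀ (S : Finset V), H.sink ∉ S → ∀ v ∈ S,
      (∑ u ∈ S.erase v, H'.mult u v) = ∑ u ∈ S.erase v, H.mult u v := by
    intro S hS v hv
    refine Finset.sum_congr rfl (fun u hu => ?_)
    have hu' : u ≠ H.sink := by
      intro hh
      exact hS (hh ▸ Finset.mem_of_mem_erase hu)
    have hv' : v ≠ H.sink := by
      intro hh
      exact hS (hh ▸ hv)
    exact mult_eq_off H H' w hmult hu' hv'
  constructor
  · intro hA S hSne hSs
    rw [hsink] at hSs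
    obtain ⟨v, hv, hle⟩ := hA S hSne hSs
    exact ⟨v, hv, by rw [key S hSs v hv]; exact hle⟩
  · intro hA S hSne hSs
    obtain ⟨v, hv, hle⟩ := hA S hSne (by rw [hsink]; exact hSs)
    exact ⟨v, hv, by rw [← key S hSs v hv]; exact hle⟩

/-- `R_{H'} \ R_H` consists precisely of the "wave-form" configurations. -/
lemma RR_iff_waveForm (hw : w ≠ H.sink) (hsink : H'.sink = H.sink)
    (hmult : ∀ x y, H'.mult x y = H.mult x y +
      (if (x = w ∧ y = H.sink) ∨ (x = H.sink ∧ y = w) then 1 else 0))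
    (η : V → ℕ) : (H'.Recurrent η ∧ ¬ H.Recurrent η) ↔ H.WaveForm w η := by
  constructor
  · rintro ⟨hR', hnR⟩
    have h0 : η H.sink = 0 := by rw [← hsink]; exact hR'.1
    have hA' : H'.Allowed η := H'.recurrent_allowed hR'
    have hA : H.Allowed η := (allowed_iff H H' w hsink hmult η).2 hA'
    have hst : ∀ v, v ≠ H.sink → v ≠ w → η v < H.deg v := by
      intro v hvs hvw
      have := hR'.2.1 v (by rw [hsink]; exact hvs)
      rwa [deg_eq_off H H' w hw hmult hvw hvs] at this
    have hww : η w = H.deg w := by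
      have hlt : η w < H'.deg w := hR'.2.1 w (by rw [hsink]; exact hw)
      rw [deg_eq_w H H' w hw hmult] at hlt
      by_contra hne
      have hwlt : η w < H.deg w := by omega
      have hstable : H.Stable η := by
        intro x hx
        by_cases hxw : x = w
        · rw [hxw]; exact hwlt
        · exact hst x hx hxw
      exact hnR (H.recurrent_of_allowed h0 hstable hA)
    exact ⟨hA, h0, hst, hww⟩
  · rintro ⟨hA, h0, hst, hww⟩
    constructor
    · apply H'.recurrent_of_allowed
      · rw [hsink]; exact h0
      · intro v hv
        rw [hsink] at hv
        by_cases hvw : v = w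
        · rw [hvw, deg_eq_w H H' w hw hmult, hww]
          omega
        · rw [deg_eq_off H H' w hw hmult hvw hv]
          exact hst v hv hvw
      · exact (allowed_iff H H' w hsink hmult η).1 hA
    · intro hR
      have := hR.2.1 w hw
      omega

end TwoGraphs

open Classical in
/-- A chosen wave list. -/
noncomputable def waveL (H : SandpileGraph V) (w : V) (η : V → ℕ) : List V :=
  if h : ∃ l, H.IsWaveList w η l then h.choose else []

/-- The chosen wave step. -/
noncomputable def waveStep (H : SandpileGraph V) (w : V) (η : V → ℕ) : V → ℕ :=
  H.toppleList η (H.waveL w η)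

/-- The chosen wave misses a neighbour of `w`. -/
def waveMissed (H : SandpileGraph V) (w : V) (η : V → ℕ) : Prop :=
  ∃ y, 0 < H.mult w y ∧ y ∉ H.waveL w η

variable (H : SandpileGraph V) (w : V)

lemma waveL_spec (hw : w ≠ H.sink) {η : V → ℕ} (hform : H.WaveForm w η) :
    H.IsWaveList w η (H.waveL w η) := by
  have h := H.exists_wave hw hform
  rw [waveL, dif_pos h]
  exact h.choose_spec

lemma waveStep_preserve (hw : w ≠ H.sink) {η : V → ℕ} (hform : H.WaveForm w η)
    (hnm : ¬ H.waveMissed w η) : H.WaveForm w (H.waveStep w η) := by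
  have hl := H.waveL_spec w hw hform
  obtain ⟨hnd, hwl, hleg, hstab⟩ := hl
  have hno : ∀ y, 0 < H.mult w y → y ∈ H.waveL w η := by
    rw [waveMissed] at hnm
    push_neg at hnm
    exact hnm
  refine ⟨H.allowed_toppleList hleg hform.1, ?_, hstab, ?_⟩
  · rw [waveStep, H.toppleList_sink hleg, hform.2.1]
  · exact H.wave_full_result hw hform ⟨hnd, hwl, hleg, hstab⟩ hno

lemma waveStep_phi_dec (hw : w ≠ H.sink) {n : V → ℕ} (hn0 : n H.sink = 0)
    (hnstrong : ∀ x, x ≠ H.sink →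
      (∑ u, (n u : ℤ) * H.mult u x) + ((Finset.univ.sup H.deg : ℕ) : ℤ) + 1
        ≤ (n x : ℤ) * H.deg x)
    {η : V → ℕ} (hform : H.WaveForm w η) :
    (∑ v, (n v : ℤ) * (H.waveStep w η v)) < ∑ v, (n v : ℤ) * (η v) := by
  have hl := H.waveL_spec w hw hform
  obtain ⟨hnd, hwl, hleg, hstab⟩ := hl
  have hterm : ∀ v : V, (n v : ℤ) * (H.waveStep w η v)
      = (n v : ℤ) * (η v) + ((∑ u ∈ (H.waveL w η).toFinset, (n v : ℤ) * (H.mult u v : ℤ))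
        - (if v ∈ (H.waveL w η).toFinset then (n v : ℤ) * (H.deg v : ℤ) else 0)) := by
    intro v
    by_cases hvs : v = H.sink
    · subst hvs
      rw [hn0]
      simp
    · have hv := H.value_nodup hleg hnd hvs
      have hstepv : (H.waveStep w η v : ℤ) = (η v : ℤ)
          + (∑ u ∈ (H.waveL w η).toFinset, (H.mult u v : ℤ))
          - (if v ∈ (H.waveL w η).toFinset then (H.deg v : ℤ) else 0) := by
        rw [show H.waveStep w η = H.toppleList η (H.waveL w η) from rfl, hv]
        by_cases hvA : v ∈ H.waveL w η
        · rw [if_pos hvA, if_pos (List.mem_toFinset.2 hvA)]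
        · rw [if_neg hvA, if_neg (fun hh => hvA (List.mem_toFinset.1 hh))]
      rw [hstepv]
      split_ifs with hvA <;> rw [← Finset.mul_sum] <;> ring
  rw [Finset.sum_congr rfl (fun v _ => hterm v), Finset.sum_add_distrib]
  have hswap : (∑ v, ∑ u ∈ (H.waveL w η).toFinset, (n v : ℤ) * (H.mult u v : ℤ))
      = ∑ u ∈ (H.waveL w η).toFinset, ∑ v, (n v : ℤ) * (H.mult u v : ℤ) := Finset.sum_comm
  have hite : (∑ v, (if v ∈ (H.waveL w η).toFinset then (n v : ℤ) * (H.deg v : ℤ) else 0))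
      = ∑ u ∈ (H.waveL w η).toFinset, (n u : ℤ) * (H.deg u : ℤ) := by
    rw [Finset.sum_ite_mem, Finset.univ_inter]
  have hkey : (∑ v, ((∑ u ∈ (H.waveL w η).toFinset, (n v : ℤ) * (H.mult u v : ℤ))
      - (if v ∈ (H.waveL w η).toFinset then (n v : ℤ) * (H.deg v : ℤ) else 0))) < 0 := by
    rw [Finset.sum_sub_distrib, hswap, hite, ← Finset.sum_sub_distrib]
    have hbound : ∀ u ∈ (H.waveL w η).toFinset,
        (∑ v, (n v : ℤ) * (H.mult u v : ℤ)) - (n u : ℤ) * (H.deg u : ℤ) ≤ -1 := by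
      intro u hu
      have hus : u ≠ H.sink := H.mem_ne_sink hleg (List.mem_toFinset.1 hu)
      have := hnstrong u hus
      have hsymm : (∑ v, (n v : ℤ) * (H.mult u v : ℤ))
          = ∑ v, (n v : ℤ) * (H.mult v u : ℤ) := by
        refine Finset.sum_congr rfl (fun v _ => ?_)
        rw [H.symm]
      rw [hsymm]
      have hD : (0:ℤ) ≤ ((Finset.univ.sup H.deg : ℕ) : ℤ) := Int.ofNat_nonneg _
      omega
    have hAne : (H.waveL w η).toFinset.Nonempty := ⟨w, List.mem_toFinset.2 hwl⟩
    calc (∑ u ∈ (H.waveL w η).toFinset,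
          ((∑ v, (n v : ℤ) * (H.mult u v : ℤ)) - (n u : ℤ) * (H.deg u : ℤ)))
        ≤ ∑ u ∈ (H.waveL w η).toFinset, (-1 : ℤ) := Finset.sum_le_sum hbound
      _ = -((H.waveL w η).toFinset.card : ℤ) := by simp
      _ < 0 := by
          have := Finset.card_pos.2 hAne
          omega
  omega

end SandpileGraph
namespace SandpileGraph

open Finset

variable {V : Type*} [Fintype V] [DecidableEq V] (H : SandpileGraph V) (w : V)

/-- Raising the value at `w` to `deg w`. -/
def liftW (H : SandpileGraph V) (w : V) (ζ : V → ℕ) : V → ℕ :=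
  fun x => if x = w then H.deg w else ζ x

lemma liftW_form (hw : w ≠ H.sink) {ζ : V → ℕ} (hζ : H.Recurrent ζ) :
    H.WaveForm w (H.liftW w ζ) := by
  have h0 := hζ.1
  have hst := hζ.2.1
  refine ⟨?_, ?_, ?_, ?_⟩
  · refine H.allowed_mono (η := ζ) ?_ (H.recurrent_allowed hζ)
    intro v
    by_cases hv : v = w
    · subst hv
      simp only [liftW, if_pos rfl]
      exact le_of_lt (hst v hw)
    · simp [liftW, hv]
  · simp only [liftW, if_neg (Ne.symm hw)]
    exact h0
  · intro v hvs hvw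
    simp only [liftW, if_neg hvw]
    exact hst v hvs
  · simp [liftW]

lemma iter_preserve (hw : w ≠ H.sink) {η : V → ℕ} (hform : H.WaveForm w η) :
    ∀ k, (∀ j, j < k → ¬ H.waveMissed w ((H.waveStep w)^[j] η)) →
      H.WaveForm w ((H.waveStep w)^[k] η) := by
  intro k
  induction k with
  | zero => intro _; exact hform
  | succ k ih =>
    intro hj
    rw [Function.iterate_succ_apply']
    exact H.waveStep_preserve w hw (ih (fun j hjk => hj j (by omega))) (hj k (by omega))

lemma not_lift_eq_step (hw : w ≠ H.sink) {ζ μ : V → ℕ} (hζ : H.Recurrent ζ)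
    (hμ : H.WaveForm w μ) (hnm : ¬ H.waveMissed w μ)
    (heq : H.liftW w ζ = H.waveStep w μ) : False := by
  have hl := H.waveL_spec w hw hμ
  have hno : ∀ y, 0 < H.mult w y → y ∈ H.waveL w μ := by
    rw [waveMissed] at hnm
    push_neg at hnm
    exact hnm
  refine H.wave_result_not_lift hw hμ hl hno (H.recurrent_allowed hζ) ?_ (hζ.2.1 w hw)
  intro v hvw
  have := congrFun heq v
  rw [liftW] at this
  simp only [if_neg hvw] at this
  exact this

lemma chain_inj (hw : w ≠ H.sink) :
    ∀ k k' (ζ ζ' : V → ℕ), H.Recurrent ζ → H.Recurrent ζ' →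
      (∀ j, j < k → ¬ H.waveMissed w ((H.waveStep w)^[j] (H.liftW w ζ))) →
      (∀ j, j < k' → ¬ H.waveMissed w ((H.waveStep w)^[j] (H.liftW w ζ'))) →
      (H.waveStep w)^[k] (H.liftW w ζ) = (H.waveStep w)^[k'] (H.liftW w ζ') →
      H.liftW w ζ = H.liftW w ζ' := by
  intro k
  induction k with
  | zero =>
    intro k' ζ ζ' hζ hζ' hj hj' heq
    cases k' with
    | zero => simpa using heq
    | succ k'' =>
      exfalso
      have hμ := H.iter_preserve w hw (H.liftW_form w hw hζ') k'' (fun j hjk => hj' j (by omega))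
      have hnm := hj' k'' (by omega)
      refine H.not_lift_eq_step w hw hζ hμ hnm ?_
      rw [Function.iterate_succ_apply'] at heq
      simpa using heq
  | succ k₁ ih =>
    intro k' ζ ζ' hζ hζ' hj hj' heq
    cases k' with
    | zero =>
      exfalso
      have hμ := H.iter_preserve w hw (H.liftW_form w hw hζ) k₁ (fun j hjk => hj j (by omega))
      have hnm := hj k₁ (by omega)
      refine H.not_lift_eq_step w hw hζ' hμ hnm ?_
      rw [Function.iterate_succ_apply'] at heq
      simpa using heq.symm
    | succ k₂ =>
      have ha := H.iter_preserve w hw (H.liftW_form w hw hζ) k₁ (fun j hjk => hj j (by omega))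
      have hb := H.iter_preserve w hw (H.liftW_form w hw hζ') k₂ (fun j hjk => hj' j (by omega))
      rw [Function.iterate_succ_apply', Function.iterate_succ_apply'] at heq
      have hab := H.wave_inj hw ha hb (H.waveL_spec w hw ha) (H.waveL_spec w hw hb) heq
      exact ih k₂ ζ ζ' hζ hζ' (fun j hjk => hj j (by omega)) (fun j hjk => hj' j (by omega)) hab

end SandpileGraph
open SandpileGraph in
/-- **Counting last waves.**  With `H'` obtained from `H` by adding one extra edge from `w`
to the sink, the number of configurations in `R_{H'} \ R_H` that are last waves is at least
`|R_H| / deg_H(w)` and at most `|R_H|`. -/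
theorem card_last_waves {V : Type*} [Fintype V] [DecidableEq V]
    (H H' : SandpileGraph V) (w : V) (hw : w ≠ H.sink)
    (hsink : H'.sink = H.sink)
    (hmult : ∀ x y, H'.mult x y = H.mult x y +
      (if (x = w ∧ y = H.sink) ∨ (x = H.sink ∧ y = w) then 1 else 0)) :
    {η : V → ℕ | H.Recurrent η}.ncard ≤
        H.deg w *
          {η : V → ℕ | H'.Recurrent η ∧ ¬ H.Recurrent η ∧ H.IsLastWaveCfg w η}.ncard ∧
      {η : V → ℕ | H'.Recurrent η ∧ ¬ H.Recurrent η ∧ H.IsLastWaveCfg w η}.ncard ≤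
        {η : V → ℕ | H.Recurrent η}.ncard := by
  classical
  set A : Set (V → ℕ) := {η : V → ℕ | H.Recurrent η} with hA
  set B : Set (V → ℕ) := {η : V → ℕ | H'.Recurrent η ∧ ¬ H.Recurrent η ∧ H.IsLastWaveCfg w η}
    with hB
  have hmemA : ∀ η, η ∈ A ↔ H.Recurrent η := by intro η; rw [hA]; rfl
  have hmemB : ∀ η, η ∈ B ↔ (H'.Recurrent η ∧ ¬ H.Recurrent η ∧ H.IsLastWaveCfg w η) := by
    intro η; rw [hB]; rfl
  -- finiteness
  have hfinA : A.Finite := by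
    refine Set.Finite.subset (Set.finite_Icc (0 : V → ℕ) H.deg) ?_
    intro η hη
    rw [hmemA] at hη
    rw [Set.mem_Icc]
    refine ⟨fun x => Nat.zero_le _, fun x => ?_⟩
    by_cases hx : x = H.sink
    · rw [hx, hη.1]; exact Nat.zero_le _
    · exact le_of_lt (hη.2.1 x hx)
  have hfinB : B.Finite := by
    refine Set.Finite.subset (Set.finite_Icc (0 : V → ℕ) H'.deg) ?_
    intro η hη
    rw [hmemB] at hη
    rw [Set.mem_Icc]
    refine ⟨fun x => Nat.zero_le _, fun x => ?_⟩
    by_cases hx : x = H'.sink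
    · rw [hx, hη.1.1]; exact Nat.zero_le _
    · exact le_of_lt (hη.1.2.1 x hx)
  -- potential
  obtain ⟨n, hn0, hnstrong⟩ := H.exists_strong_vec
  have hcast : ∀ η : V → ℕ, ((∑ v, n v * η v : ℕ) : ℤ) = ∑ v, (n v : ℤ) * (η v : ℤ) := by
    intro η; push_cast; rfl
  have hstop : ∀ N : ℕ, ∀ η, H.WaveForm w η → (∑ v, n v * η v) ≤ N →
      ∃ k, H.waveMissed w ((H.waveStep w)^[k] η) := by
    intro N
    induction N with
    | zero =>
      intro η hform hle
      by_cases hm : H.waveMissed w η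
      · exact ⟨0, hm⟩
      · exfalso
        have hdec := H.waveStep_phi_dec w hw hn0 hnstrong hform
        have h1 : (0:ℤ) ≤ ∑ v, (n v : ℤ) * ((H.waveStep w η) v : ℤ) :=
          Finset.sum_nonneg (fun v _ => mul_nonneg (Int.ofNat_nonneg _) (Int.ofNat_nonneg _))
        have h2 : (∑ v, (n v : ℤ) * (η v : ℤ)) ≤ 0 := by
          rw [← hcast η]
          exact_mod_cast hle
        omega
    | succ N ih =>
      intro η hform hle
      by_cases hm : H.waveMissed w η
      · exact ⟨0, hm⟩
      · have hform' := H.waveStep_preserve w hw hform hm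
        have hdec := H.waveStep_phi_dec w hw hn0 hnstrong hform
        have hle' : (∑ v, n v * (H.waveStep w η v)) ≤ N := by
          have e1 := hcast η
          have e2 := hcast (H.waveStep w η)
          omega
        obtain ⟨k, hk⟩ := ih (H.waveStep w η) hform' hle'
        exact ⟨k + 1, by rwa [Function.iterate_succ_apply]⟩
  have hex : ∀ ζ, H.Recurrent ζ → ∃ k, H.waveMissed w ((H.waveStep w)^[k] (H.liftW w ζ)) := by
    intro ζ hζ
    exact hstop (∑ v, n v * (H.liftW w ζ v)) _ (H.liftW_form w hw hζ) le_rfl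
  set Ψ : (V → ℕ) → (V → ℕ) := fun ζ =>
    if hζ : H.Recurrent ζ then (H.waveStep w)^[Nat.find (hex ζ hζ)] (H.liftW w ζ) else ζ
    with hΨ
  have hΨspec : ∀ ζ (hζ : H.Recurrent ζ),
      Ψ ζ = (H.waveStep w)^[Nat.find (hex ζ hζ)] (H.liftW w ζ) := by
    intro ζ hζ
    simp only [hΨ, dif_pos hζ]
  have hΨform : ∀ ζ (hζ : H.Recurrent ζ), H.WaveForm w (Ψ ζ) := by
    intro ζ hζ
    rw [hΨspec ζ hζ]
    exact H.iter_preserve w hw (H.liftW_form w hw hζ) _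
      (fun j hj => Nat.find_min (hex ζ hζ) hj)
  have hΨmissed : ∀ ζ (hζ : H.Recurrent ζ), H.waveMissed w (Ψ ζ) := by
    intro ζ hζ
    rw [hΨspec ζ hζ]
    exact Nat.find_spec (hex ζ hζ)
  have hΨB : ∀ ζ, H.Recurrent ζ → Ψ ζ ∈ B := by
    intro ζ hζ
    have hform := hΨform ζ hζ
    have hRR := (RR_iff_waveForm H H' w hw hsink hmult (Ψ ζ)).2 hform
    rw [hmemB]
    refine ⟨hRR.1, hRR.2, ?_⟩
    obtain ⟨y, hy0, hyl⟩ := hΨmissed ζ hζ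
    exact ⟨H.waveL w (Ψ ζ), H.waveL_spec w hw hform, y, hy0, hyl⟩
  -- lower bound
  have hlower : A.ncard ≤ H.deg w * B.ncard := by
    rw [Set.ncard_eq_toFinset_card A hfinA, Set.ncard_eq_toFinset_card B hfinB]
    have hmaps : ∀ ζ ∈ hfinA.toFinset,
        (Ψ ζ, ζ w) ∈ hfinB.toFinset ×ˢ Finset.range (H.deg w) := by
      intro ζ hζm
      have hζ : H.Recurrent ζ := (hmemA ζ).1 ((Set.Finite.mem_toFinset hfinA).1 hζm)
      rw [Finset.mem_product, Finset.mem_range]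
      exact ⟨(Set.Finite.mem_toFinset hfinB).2 (hΨB ζ hζ), hζ.2.1 w hw⟩
    have hinj : Set.InjOn (fun ζ => (Ψ ζ, ζ w)) hfinA.toFinset := by
      intro ζ hζm ζ' hζ'm hpair
      have hζ : H.Recurrent ζ := (hmemA ζ).1 ((Set.Finite.mem_toFinset hfinA).1 hζm)
      have hζ' : H.Recurrent ζ' := (hmemA ζ').1 ((Set.Finite.mem_toFinset hfinA).1 hζ'm)
      have h1 : Ψ ζ = Ψ ζ' := congrArg Prod.fst hpair
      have h2 : ζ w = ζ' w := congrArg Prod.snd hpair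
      rw [hΨspec ζ hζ, hΨspec ζ' hζ'] at h1
      have hlifteq := H.chain_inj w hw _ _ ζ ζ' hζ hζ'
        (fun j hj => Nat.find_min (hex ζ hζ) hj)
        (fun j hj => Nat.find_min (hex ζ' hζ') hj) h1
      funext x
      by_cases hxw : x = w
      · rw [hxw]; exact h2
      · have := congrFun hlifteq x
        rwa [liftW, liftW, if_neg hxw, if_neg hxw] at this
    have hcard := Finset.card_le_card_of_injOn (fun ζ => (Ψ ζ, ζ w)) hmaps hinj
    rw [Finset.card_product, Finset.card_range] at hcard
    rw [mul_comm]
    exact hcard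
  -- upper bound
  set Φm : (V → ℕ) → (V → ℕ) := fun η =>
    if hη : H.IsLastWaveCfg w η then H.toppleList η hη.choose else η with hΦm
  have hΦval : ∀ η (hη : H.IsLastWaveCfg w η), Φm η = H.toppleList η hη.choose := by
    intro η hη
    simp only [hΦm, dif_pos hη]
  have hΦA : ∀ η ∈ B, Φm η ∈ A := by
    intro η hη
    rw [hmemB] at hη
    obtain ⟨hR', hnR, hlw⟩ := hη
    have hform := (RR_iff_waveForm H H' w hw hsink hmult η).1 ⟨hR', hnR⟩
    obtain ⟨hwl, y, hy0, hyl⟩ := hlw.choose_spec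
    rw [hmemA, hΦval η hlw]
    refine H.recurrent_of_allowed ?_ ?_ ?_
    · rw [H.toppleList_sink hwl.2.2.1, hform.2.1]
    · intro x hx
      by_cases hxw : x = w
      · rw [hxw]; exact H.wave_last_result hw hform hwl hy0 hyl
      · exact hwl.2.2.2 x hx hxw
    · exact H.allowed_toppleList hwl.2.2.1 hform.1
  have hΦinj : Set.InjOn Φm B := by
    intro η hη η' hη' heq
    rw [hmemB] at hη hη'
    obtain ⟨hR1, hnR1, hlw1⟩ := hη
    obtain ⟨hR2, hnR2, hlw2⟩ := hη'
    have hform1 := (RR_iff_waveForm H H' w hw hsink hmult η).1 ⟨hR1, hnR1⟩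
    have hform2 := (RR_iff_waveForm H H' w hw hsink hmult η').1 ⟨hR2, hnR2⟩
    refine H.wave_inj hw hform1 hform2 hlw1.choose_spec.1 hlw2.choose_spec.1 ?_
    rw [← hΦval η hlw1, ← hΦval η' hlw2, heq]
  have hupper : B.ncard ≤ A.ncard :=
    Set.ncard_le_ncard_of_injOn Φm hΦA hΦinj hfinA
  exact ⟨hlower, hupper⟩
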